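/- arXiv:2401.12446 — 5 statements merged into one kernel-verified Lean document; each statement's English description precedes it below -/
import Mathlib

section
/- Let I be a proper nonzero monomial ideal of S = K[x_1,…,x_n]. Then for every integer s ≥ 1 and every vector a ∈ ℕ^n with |a| ≤ γ(I)·s − 1, one has √(I^s : x^a) = √I; in particular (I^s : x^a) ⊆ √I. -/
open MvPolynomial

/-! Setting: `K` a field, `S = K[x_1, …, x_n]` realized as `MvPolynomial (Fin n) K`. -/

/-- `I` is a monomial ideal: an ideal generated by monomials. -/
def IsMonomialIdeal {K : Type} [Field K] {n : ℕ} (I : Ideal (MvPolynomial (Fin n) K)) : Prop :=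
  ∃ A : Set (Fin n →₀ ℕ), I = Ideal.span ((fun a => (monomial a (1 : K))) '' A)

/-- `I` is a squarefree monomial ideal: an ideal generated by squarefree monomials. -/
def IsSquarefreeMonomialIdeal {K : Type} [Field K] {n : ℕ}
    (I : Ideal (MvPolynomial (Fin n) K)) : Prop :=
  ∃ A : Set (Fin n →₀ ℕ), (∀ a ∈ A, ∀ i, a i ≤ 1) ∧
    I = Ideal.span ((fun a => (monomial a (1 : K))) '' A)

/-- Exponent vectors of the minimal monomial generators `G(I)` of a monomial ideal `I`:
monomials of `I` none of whose proper monomial divisors lies in `I`. -/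
def minGens {K : Type} [Field K] {n : ℕ} (I : Ideal (MvPolynomial (Fin n) K)) :
    Set (Fin n →₀ ℕ) :=
  {a | monomial a (1 : K) ∈ I ∧ ∀ b : Fin n →₀ ℕ, b ≤ a → b ≠ a → monomial b (1 : K) ∉ I}

/-- `γ(I) = min{deg_{x_j}(u) : 1 ≤ j ≤ n, u ∈ G(I), x_j ∣ u}`. -/
noncomputable def gammaI {K : Type} [Field K] {n : ℕ}
    (I : Ideal (MvPolynomial (Fin n) K)) : ℕ :=
  sInf {d | ∃ a ∈ minGens I, ∃ j : Fin n, a j ≠ 0 ∧ a j = d}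

/-- The `m`-th symbolic power `I^(m) = ⋂_{p ∈ Min(I)} Ker(S → (S/I^m)_p)`; the kernel of
`S → (S/I^m)_p` is the contraction of `I^m S_p` from the localization `S_p`. -/
noncomputable def symbolicPower {K : Type} [Field K] {n : ℕ}
    (I : Ideal (MvPolynomial (Fin n) K)) (m : ℕ) : Ideal (MvPolynomial (Fin n) K) :=
  ⨅ (p : Ideal (MvPolynomial (Fin n) K)) (hp : p ∈ I.minimalPrimes),
    Ideal.comap (algebraMap (MvPolynomial (Fin n) K)
        (Localization (@Ideal.primeCompl _ _ p hp.1.1)))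
      ((I ^ m).map (algebraMap (MvPolynomial (Fin n) K)
        (Localization (@Ideal.primeCompl _ _ p hp.1.1))))

/-- The integral closure of an ideal `I`: the (ideal generated by the) set of elements `f`
satisfying an equation `f^k + c_1 f^(k-1) + ⋯ + c_k = 0` with `c_i ∈ I^i`.  (This set is
already an ideal, so taking the span is harmless.) -/
noncomputable def intCl {K : Type} [Field K] {n : ℕ} (I : Ideal (MvPolynomial (Fin n) K)) :
    Ideal (MvPolynomial (Fin n) K) :=
  Ideal.span {f | ∃ k : ℕ, 1 ≤ k ∧ ∃ c : ℕ → MvPolynomial (Fin n) K,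
    (∀ i ∈ Finset.Icc 1 k, c i ∈ I ^ i) ∧
    f ^ k + ∑ i ∈ Finset.Icc 1 k, c i * f ^ (k - i) = 0}

/-- The analytic spread `ℓ(I)`: the Krull dimension of `R(I)/m R(I)`, where `R(I) ⊆ S[t]`
is the Rees algebra of `I` and `m = (x_1, …, x_n)`. -/
noncomputable def analyticSpread {K : Type} [Field K] {n : ℕ}
    (I : Ideal (MvPolynomial (Fin n) K)) : ℕ :=
  ENat.toNat (WithBot.unbotD 0 (ringKrullDim ((reesAlgebra I) ⧸
    (Ideal.map (algebraMap (MvPolynomial (Fin n) K) (reesAlgebra I))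
      (Ideal.span (Set.range (X : Fin n → MvPolynomial (Fin n) K)))))))

/-- The height of an ideal `I`: the minimal height of a prime containing `I`. -/
noncomputable def idealHeight {K : Type} [Field K] {n : ℕ}
    (I : Ideal (MvPolynomial (Fin n) K)) : ℕ :=
  ENat.toNat (⨅ (p : PrimeSpectrum (MvPolynomial (Fin n) K)) (_ : I ≤ p.asIdeal),
    Order.height p)

/-! Castelnuovo–Mumford regularity via graded Betti numbers.  For a graded module
`M = I/J` (with `I`, `J` homogeneous ideals, `J ⊆ I`; take `J = ⊥` for `M = I`),
`β_{i,j}(M) = dim_K Tor_i^S(M, K)_j`, and `Tor_i^S(M, K)` is computed as the `i`-th homology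
of `M ⊗_S K_•(x_1, …, x_n)`, the Koszul complex. The degree-`j` strand of
`M ⊗ K_i` is `⊕_{T ⊆ [n], |T| = i} M_{j-i} · e_T`; we encode its elements as functions
from `Finset (Fin n)` to `S`, supported on the `i`-element subsets, with values homogeneous
of degree `j - i` lying in `I` (taken modulo componentwise membership in `J`). -/

/-- The Koszul differential `e_T ⊗ f ↦ ∑_{t ∈ T} (-1)^{|{u ∈ T : u < t}|} e_{T∖{t}} ⊗ x_t f`,
written for chains `c : Finset (Fin n) → S`. -/
noncomputable def koszulD {K : Type} [Field K] {n : ℕ}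
    (c : Finset (Fin n) → MvPolynomial (Fin n) K) :
    Finset (Fin n) → MvPolynomial (Fin n) K :=
  fun T => ∑ t ∈ Tᶜ, ((-1 : K) ^ (T.filter (fun u => u < t)).card) • (X t * c (insert t T))

/-- A chain of the degree-`j` strand of `I ⊗ K_i`: supported on `i`-element subsets, with
values in `I` homogeneous of degree `j - i`. -/
def IsKoszulChain {K : Type} [Field K] {n : ℕ} (I : Ideal (MvPolynomial (Fin n) K))
    (i j : ℕ) (c : Finset (Fin n) → MvPolynomial (Fin n) K) : Prop :=
  (∀ T : Finset (Fin n), T.card = i →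
      c T ∈ I ∧ c T ∈ homogeneousSubmodule (Fin n) K (j - i)) ∧
  (∀ T : Finset (Fin n), T.card ≠ i → c T = 0)

/-- `β_{i,j}(I/J) ≠ 0`: the degree-`j` strand of the Koszul homology
`Tor_i((I/J), K)` is nonzero, i.e. there is a cycle (modulo `J`) which is not a
boundary (modulo `J`). -/
def BettiNonzero {K : Type} [Field K] {n : ℕ} (I J : Ideal (MvPolynomial (Fin n) K))
    (i j : ℕ) : Prop :=
  ∃ c : Finset (Fin n) → MvPolynomial (Fin n) K,
    IsKoszulChain I i j c ∧ (∀ T, koszulD c T ∈ J) ∧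
      ¬ ∃ b : Finset (Fin n) → MvPolynomial (Fin n) K,
          IsKoszulChain I (i + 1) j b ∧ ∀ T, c T - koszulD b T ∈ J

/-- The Castelnuovo–Mumford regularity `reg(I/J) = max{j - i : β_{i,j}(I/J) ≠ 0}` of the
graded module `I/J` (use `J = ⊥` for the module `I` itself), with `reg 0 = ⊥ = -∞`. -/
noncomputable def cmReg {K : Type} [Field K] {n : ℕ}
    (I J : Ideal (MvPolynomial (Fin n) K)) : WithBot ℤ :=
  sSup {r : WithBot ℤ | ∃ i j : ℕ, BettiNonzero I J i j ∧ r = ((j : ℤ) - (i : ℤ) : ℤ)}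


section Auxiliary

variable {K : Type} [Field K] {n : ℕ}

private lemma exists_minGen_le {I : Ideal (MvPolynomial (Fin n) K)} {c : Fin n →₀ ℕ}
    (hc : monomial c (1 : K) ∈ I) : ∃ b ∈ minGens I, b ≤ c := by
  classical
  set s : Set (Fin n →₀ ℕ) := {b | b ≤ c ∧ monomial b (1 : K) ∈ I} with hs
  have hfin : s.Finite := (Set.finite_Iic c).subset (fun b hb => hb.1)
  obtain ⟨b, hb, hmin⟩ := hfin.exists_minimal ⟨c, le_refl c, hc⟩
  refine ⟨b, ⟨hb.2, ?_⟩, hb.1⟩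
  intro b' hb' hne hbI
  exact hne (le_antisymm hb' (hmin ⟨hb'.trans hb.1, hbI⟩ hb'))

private lemma pow_le_span {I : Ideal (MvPolynomial (Fin n) K)}
    (hmon : IsMonomialIdeal I) (s : ℕ) :
    I ^ s ≤ Ideal.span ((fun b => monomial b (1 : K)) ''
      {b | ∃ g : Fin s → (Fin n →₀ ℕ), (∀ k, monomial (g k) (1 : K) ∈ I) ∧ ∑ k, g k = b}) := by
  induction s with
  | zero =>
    have h1 : (1 : MvPolynomial (Fin n) K) ∈ Ideal.span ((fun b => monomial b (1 : K)) ''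
        {b | ∃ g : Fin 0 → (Fin n →₀ ℕ), (∀ k, monomial (g k) (1 : K) ∈ I) ∧ ∑ k, g k = b}) := by
      apply Ideal.subset_span
      exact ⟨0, ⟨Fin.elim0, fun k => k.elim0, by simp⟩, by simp⟩
    rw [pow_zero]
    intro x _
    simpa using Ideal.mul_mem_left _ x h1
  | succ s ih =>
    have hI1 : I ≤ Ideal.span ((fun b => monomial b (1 : K)) ''
        {b | monomial b (1 : K) ∈ I}) := by
      obtain ⟨A, hA⟩ := hmon
      conv_lhs => rw [hA]
      apply Ideal.span_mono
      apply Set.image_mono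
      intro b hb
      rw [hA]
      exact Ideal.subset_span ⟨b, hb, rfl⟩
    calc I ^ (s + 1) = I ^ s * I := pow_succ I s
      _ ≤ _ * _ := Ideal.mul_mono ih hI1
      _ = Ideal.span _ := Ideal.span_mul_span' _ _
      _ ≤ _ := ?_
    apply Ideal.span_le.mpr
    rintro x hx
    rw [Set.mem_mul] at hx
    obtain ⟨p, hp, q, hq, rfl⟩ := hx
    obtain ⟨b1, ⟨g, hg, hsum⟩, rfl⟩ := hp
    obtain ⟨b2, hb2, rfl⟩ := hq
    apply Ideal.subset_span
    refine ⟨b1 + b2, ⟨Fin.cons b2 g, ?_, ?_⟩, ?_⟩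
    · intro k
      refine Fin.cases ?_ ?_ k
      · simpa using hb2
      · intro i; simpa using hg i
    · rw [Fin.sum_cons, hsum, add_comm]
    · simp [monomial_mul]

private lemma colon_le_radical {I : Ideal (MvPolynomial (Fin n) K)}
    (hmon : IsMonomialIdeal I) (s : ℕ) {a : Fin n →₀ ℕ}
    (ha : (∑ i, (a i : ℤ)) ≤ (gammaI I : ℤ) * (s : ℤ) - 1) :
    (I ^ s).colon (Ideal.span {monomial a (1 : K)}) ≤ I.radical := by
  classical
  intro f hf
  rw [Ideal.mem_colon_span_singleton] at hf
  rw [f.as_sum]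
  apply Ideal.sum_mem
  intro m hm
  have h1 : monomial m (f.coeff m) = C (f.coeff m) * monomial m (1 : K) := by
    rw [C_mul_monomial, mul_one]
  rw [h1]
  apply Ideal.mul_mem_left
  have hsup : m + a ∈ (f * monomial a (1 : K)).support := by
    rw [mem_support_iff, coeff_mul_monomial, mul_one]
    exact mem_support_iff.mp hm
  have hmem := pow_le_span hmon s hf
  rw [mem_ideal_span_monomial_image] at hmem
  obtain ⟨b, ⟨g, hgI, hgsum⟩, hble⟩ := hmem _ hsup
  choose h hhmin hhle using fun k => exists_minGen_le (hgI k)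
  have hsum_le : ∀ j, (∑ k, h k j) ≤ m j + a j := by
    intro j
    calc ∑ k, h k j ≤ ∑ k, g k j := Finset.sum_le_sum fun k _ => (hhle k) j
      _ = (∑ k, g k) j := (Finsupp.finset_sum_apply _ _ _).symm
      _ = b j := by rw [hgsum]
      _ ≤ (m + a) j := hble j
      _ = m j + a j := rfl
  by_cases hcase : ∃ k, ∀ j, h k j ≠ 0 → m j ≠ 0
  · obtain ⟨k, hk⟩ := hcase
    refine ⟨∑ j, h k j, ?_⟩
    rw [monomial_pow, one_pow]
    have hle : h k ≤ (∑ j, h k j) • m := by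
      rw [Finsupp.le_def]
      intro j
      rcases Nat.eq_zero_or_pos (h k j) with h0 | hpos
      · simp [h0]
      · have hmj : 1 ≤ m j := Nat.one_le_iff_ne_zero.mpr (hk j (Nat.pos_iff_ne_zero.mp hpos))
        have hN : h k j ≤ ∑ j, h k j :=
          Finset.single_le_sum (f := fun j => h k j) (fun _ _ => Nat.zero_le _)
            (Finset.mem_univ j)
        calc h k j ≤ ∑ j, h k j := hN
          _ = (∑ j, h k j) * 1 := (mul_one _).symm
          _ ≤ (∑ j, h k j) * m j := Nat.mul_le_mul_left _ hmj
          _ = ((∑ j, h k j) • m) j := by simp [Finsupp.smul_apply]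
    have heq : monomial ((∑ j, h k j) • m) (1 : K) =
        monomial (h k) 1 * monomial ((∑ j, h k j) • m - h k) 1 := by
      rw [monomial_mul, one_mul, add_tsub_cancel_of_le hle]
    rw [heq]
    exact Ideal.mul_mem_right _ _ (hhmin k).1
  · exfalso
    push_neg at hcase
    choose jk hjk1 hjk2 using hcase
    set Z : Finset (Fin n) := Finset.univ.filter (fun j => m j = 0) with hZ
    have key : gammaI I * s ≤ ∑ j ∈ Z, a j := by
      have e1 : ∀ k : Fin s, gammaI I ≤ h k (jk k) := fun k =>
        Nat.sInf_le ⟨h k, hhmin k, jk k, hjk1 k, rfl⟩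
      have e2 : ∀ k : Fin s, h k (jk k) ≤ ∑ j ∈ Z, h k j := fun k =>
        Finset.single_le_sum (fun _ _ => Nat.zero_le _)
          (by simp [hZ, hjk2 k])
      calc gammaI I * s = ∑ _k : Fin s, gammaI I := by
            simp [Finset.sum_const, Finset.card_univ, mul_comm]
        _ ≤ ∑ k, h k (jk k) := Finset.sum_le_sum fun k _ => e1 k
        _ ≤ ∑ k, ∑ j ∈ Z, h k j := Finset.sum_le_sum fun k _ => e2 k
        _ = ∑ j ∈ Z, ∑ k, h k j := Finset.sum_comm
        _ ≤ ∑ j ∈ Z, a j := by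
            apply Finset.sum_le_sum
            intro j hj
            have hz : m j = 0 := by simpa [hZ] using hj
            have := hsum_le j
            omega
    have key2 : gammaI I * s ≤ ∑ j, a j :=
      key.trans (Finset.sum_le_sum_of_subset (Finset.filter_subset _ _))
    have hcast : ((gammaI I * s : ℕ) : ℤ) ≤ ((∑ j, a j : ℕ) : ℤ) := Int.ofNat_le.mpr key2
    push_cast at hcast
    rw [show (∑ i, (a i : ℤ)) = ((∑ i, a i : ℕ) : ℤ) by push_cast; ring] at ha
    push_cast at ha
    linarith

end Auxiliary

/-- For a proper nonzero monomial ideal `I`, an integer `s ≥ 1` and a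
vector `a ∈ ℕ^n` with `|a| ≤ γ(I)·s - 1`, one has `√(Iˢ : xᵃ) = √I`; in particular
`(Iˢ : xᵃ) ⊆ √I`. -/
theorem radical_colon_pow_eq {K : Type} [Field K] {n : ℕ}
    (I : Ideal (MvPolynomial (Fin n) K))
    (hmon : IsMonomialIdeal I) (hbot : I ≠ ⊥) (htop : I ≠ ⊤)
    (s : ℕ) (hs : 1 ≤ s) (a : Fin n →₀ ℕ)
    (ha : (∑ i, (a i : ℤ)) ≤ (gammaI I : ℤ) * (s : ℤ) - 1) :
    Ideal.radical ((I ^ s).colon (Ideal.span {monomial a (1 : K)})) = Ideal.radical I ∧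
      (I ^ s).colon (Ideal.span {monomial a (1 : K)}) ≤ Ideal.radical I := by
  have hcol : (I ^ s).colon (Ideal.span {monomial a (1 : K)}) ≤ I.radical :=
    colon_le_radical hmon s ha
  refine ⟨le_antisymm ?_ ?_, hcol⟩
  · calc ((I ^ s).colon (Ideal.span {monomial a (1 : K)})).radical
        ≤ I.radical.radical := Ideal.radical_mono hcol
      _ = I.radical := Ideal.radical_idem I
  · calc I.radical = (I ^ s).radical :=
        (Ideal.radical_pow (I := I) (Nat.one_le_iff_ne_zero.mp hs)).symm
      _ ≤ ((I ^ s).colon (Ideal.span {monomial a (1 : K)})).radical :=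
        Ideal.radical_mono fun x hx =>
          Ideal.mem_colon_span_singleton.mpr (Ideal.mul_mem_right _ _ hx)
end

section
/- Let I be a proper nonzero monomial ideal of S = K[x_1,…,x_n]. Then for every integer s ≥ 1 and every vector a ∈ ℕ^n with |a| ≤ γ(I)·s − 1, one has √(\overline{I^s} : x^a) = √I, where \overline{I^s} denotes the integral closure of I^s. -/
open MvPolynomial

/-! ### Auxiliary machinery: a weight homomorphism into `S[T]` and weight-valuation ideals -/

section AuxWeight

variable {K : Type} [Field K] {n : ℕ}

/-- The ring homomorphism `S → S[T]`, `x_j ↦ x_j T^{w_j}`. -/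
noncomputable def phiW (w : Fin n → ℕ) :
    MvPolynomial (Fin n) K →+* Polynomial (MvPolynomial (Fin n) K) :=
  eval₂Hom (Polynomial.C.comp MvPolynomial.C)
    (fun j => Polynomial.C (X j) * Polynomial.X ^ (w j))

lemma phiW_monomial (w : Fin n → ℕ) (b : Fin n →₀ ℕ) (r : K) :
    phiW w (monomial b r) =
      Polynomial.C (monomial b r) * Polynomial.X ^ (∑ j, w j * b j) := by
  have h1 : (∏ j : Fin n, (X j : MvPolynomial (Fin n) K) ^ b j) = monomial b 1 := by
    rw [← prod_X_pow_eq_monomial]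
    exact (Finset.prod_subset (Finset.subset_univ _) (by
      intro j _ hj
      rw [Finsupp.notMem_support_iff.mp hj, pow_zero])).symm
  rw [phiW, eval₂Hom_monomial, Finsupp.prod_fintype _ _ (fun i => pow_zero _)]
  simp_rw [mul_pow, ← pow_mul]
  rw [Finset.prod_mul_distrib, Finset.prod_pow_eq_pow_sum]
  simp_rw [← map_pow, ← map_prod, h1, RingHom.comp_apply, ← mul_assoc, ← map_mul,
    C_mul_monomial, mul_one]

/-- The ideal of elements all of whose monomials have `w`-weight at least `t`. -/
noncomputable def VW (w : Fin n → ℕ) (t : ℕ) : Ideal (MvPolynomial (Fin n) K) :=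
  Ideal.comap (phiW w) (Ideal.span {Polynomial.X ^ t})

lemma mem_VW {w : Fin n → ℕ} {t : ℕ} {g : MvPolynomial (Fin n) K} :
    g ∈ VW w t ↔ Polynomial.X ^ t ∣ phiW w g := by
  rw [VW, Ideal.mem_comap, Ideal.mem_span_singleton]

lemma VW_pow {w : Fin n → ℕ} {t : ℕ} {J : Ideal (MvPolynomial (Fin n) K)}
    (hJ : J ≤ VW w t) : ∀ m : ℕ, J ^ m ≤ VW w (t * m) := by
  intro m
  induction m with
  | zero =>
    intro g _
    rw [mem_VW, Nat.mul_zero, pow_zero]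
    exact one_dvd _
  | succ m ih =>
    rw [pow_succ]
    refine Ideal.mul_le.mpr fun r hr q hq => ?_
    rw [mem_VW, map_mul]
    have : t * (m + 1) = t * m + t := by ring
    rw [this, pow_add]
    exact mul_dvd_mul (mem_VW.mp (ih hr)) (mem_VW.mp (hJ hq))

lemma natTrailingDegree_pow' {R : Type*} [CommRing R] [IsDomain R]
    {p : Polynomial R} (hp : p ≠ 0) (k : ℕ) :
    (p ^ k).natTrailingDegree = k * p.natTrailingDegree := by
  induction k with
  | zero => simp [Polynomial.natTrailingDegree_one]
  | succ k ih =>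
    rw [pow_succ, Polynomial.natTrailingDegree_mul (pow_ne_zero _ hp) hp, ih]
    ring

lemma intCl_le_VW {w : Fin n → ℕ} {t : ℕ} {J : Ideal (MvPolynomial (Fin n) K)}
    (hJ : ∀ i : ℕ, J ^ i ≤ VW w (t * i)) : intCl J ≤ VW w t := by
  rw [intCl, Ideal.span_le]
  rintro h ⟨k, hk, c, hc, heq⟩
  rw [SetLike.mem_coe, mem_VW]
  by_cases h0 : phiW (K := K) w h = 0
  · rw [h0]; exact dvd_zero _
  set p := phiW (K := K) w h with hp
  set m := p.natTrailingDegree with hm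
  have hXm : Polynomial.X ^ m ∣ p :=
    Polynomial.X_pow_dvd_iff.mpr fun d hd =>
      Polynomial.coeff_eq_zero_of_lt_natTrailingDegree hd
  rcases le_or_gt t m with hle | hlt
  · exact dvd_trans (pow_dvd_pow _ hle) hXm
  exfalso
  have heq2 : p ^ k = -∑ i ∈ Finset.Icc 1 k, phiW (K := K) w (c i) * p ^ (k - i) := by
    have h2 := congrArg (phiW (K := K) w) heq
    rw [map_add, map_pow, map_sum, map_zero] at h2
    simp_rw [map_mul, map_pow] at h2
    exact eq_neg_of_add_eq_zero_left h2
  have hdvd : Polynomial.X ^ (k * m + 1) ∣ p ^ k := by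
    rw [heq2]
    refine dvd_neg.mpr (Finset.dvd_sum fun i hi => ?_)
    obtain ⟨h1i, hik⟩ := Finset.mem_Icc.mp hi
    have d1 : Polynomial.X ^ (t * i) ∣ phiW (K := K) w (c i) :=
      mem_VW.mp (hJ i (hc i hi))
    have d2 : Polynomial.X ^ (m * (k - i)) ∣ p ^ (k - i) := by
      rw [pow_mul]; exact pow_dvd_pow_of_dvd hXm _
    have d3 : Polynomial.X ^ (t * i + m * (k - i)) ∣ phiW (K := K) w (c i) * p ^ (k - i) := by
      rw [pow_add]; exact mul_dvd_mul d1 d2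
    refine dvd_trans (pow_dvd_pow _ ?_) d3
    have hti : (m + 1) * i ≤ t * i := Nat.mul_le_mul_right i hlt
    have hmk : m * i + m * (k - i) = m * k := by
      rw [← Nat.mul_add, Nat.add_sub_cancel' hik]
    nlinarith [hti, hmk, h1i]
  have hpk : p ^ k ≠ 0 := pow_ne_zero _ h0
  have hco : (p ^ k).coeff (k * m) = 0 :=
    Polynomial.X_pow_dvd_iff.mp hdvd _ (Nat.lt_succ_self _)
  have hntd : (p ^ k).natTrailingDegree = k * m := natTrailingDegree_pow' h0 k
  have : (p ^ k).trailingCoeff = 0 := by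
    rw [Polynomial.trailingCoeff, hntd]; exact hco
  exact (Polynomial.trailingCoeff_nonzero_iff_nonzero.mpr hpk) this

lemma exists_minGens_le {I : Ideal (MvPolynomial (Fin n) K)}
    (a : Fin n →₀ ℕ) (ha : monomial a (1 : K) ∈ I) : ∃ b ∈ minGens I, b ≤ a := by
  have H : ∀ (N : ℕ) (a : Fin n →₀ ℕ), (∑ j, a j) ≤ N → monomial a (1 : K) ∈ I →
      ∃ b ∈ minGens I, b ≤ a := by
    intro N
    induction N with
    | zero =>
      intro a hN ha
      refine ⟨a, ⟨ha, fun b hb hne => absurd ?_ hne⟩, le_refl a⟩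
      ext j
      have h0 : a j = 0 := by
        have h4 : a j ≤ ∑ j, a j := by
          simpa using Finset.single_le_sum (f := fun j => a j) (fun _ _ => Nat.zero_le _)
            (Finset.mem_univ j)
        omega
      have := Finsupp.le_def.mp hb j
      omega
    | succ N ih =>
      intro a hN ha
      by_cases hmin : ∀ b ≤ a, b ≠ a → monomial b (1 : K) ∉ I
      · exact ⟨a, ⟨ha, hmin⟩, le_refl a⟩
      · push_neg at hmin
        obtain ⟨b, hba, hne, hbI⟩ := hmin
        have hlt : (∑ j, b j) < ∑ j, a j := by
          obtain ⟨j, hj⟩ : ∃ j, b j ≠ a j := by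
            by_contra hcon; push_neg at hcon; exact hne (Finsupp.ext hcon)
          exact Finset.sum_lt_sum (fun j _ => Finsupp.le_def.mp hba j)
            ⟨j, Finset.mem_univ j, lt_of_le_of_ne (Finsupp.le_def.mp hba j) hj⟩
        obtain ⟨b', hb', hb'b⟩ := ih b (by omega) hbI
        exact ⟨b', hb', le_trans hb'b hba⟩
  exact H (∑ j, a j) a le_rfl ha

lemma monomial_mem_radical_of {I : Ideal (MvPolynomial (Fin n) K)} (htop : I ≠ ⊤)
    {b c : Fin n →₀ ℕ} (hb : monomial b (1 : K) ∈ I) (hall : ∀ j, b j ≠ 0 → c j ≠ 0) :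
    monomial c (1 : K) ∈ I.radical := by
  set N := ∑ j, b j with hN
  have hbne : b ≠ 0 := by
    rintro rfl
    apply htop
    rw [Ideal.eq_top_iff_one]
    rwa [show (monomial (0 : Fin n →₀ ℕ) (1 : K)) = 1 by
      rw [monomial_zero']; exact map_one _] at hb
  have hN1 : 1 ≤ N := by
    obtain ⟨j, hj⟩ : ∃ j, b j ≠ 0 := by
      by_contra hcon; push_neg at hcon; exact hbne (Finsupp.ext hcon)
    have h4 : b j ≤ N := by
      simpa using Finset.single_le_sum (f := fun j => b j) (fun _ _ => Nat.zero_le _)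
        (Finset.mem_univ j)
    omega
  refine ⟨N, ?_⟩
  rw [monomial_pow, one_pow]
  have hle : b ≤ N • c := by
    rw [Finsupp.le_def]
    intro j
    rw [Finsupp.smul_apply, smul_eq_mul]
    by_cases hbj : b j = 0
    · omega
    · have hcj : 1 ≤ c j := Nat.one_le_iff_ne_zero.mpr (hall j hbj)
      have hbN : b j ≤ N := by
        simpa using Finset.single_le_sum (f := fun j => b j)
          (fun _ _ => Nat.zero_le _) (Finset.mem_univ j)
      calc b j ≤ N := hbN
        _ = N * 1 := (Nat.mul_one N).symm
        _ ≤ N * c j := Nat.mul_le_mul_left N hcj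
  have hsplit : monomial (N • c) (1 : K) = monomial (N • c - b) 1 * monomial b 1 := by
    rw [monomial_mul, one_mul, tsub_add_cancel_of_le hle]
  rw [hsplit]
  exact Ideal.mul_mem_left _ _ hb

lemma mem_ideal_of_monomials {J : Ideal (MvPolynomial (Fin n) K)}
    {f : MvPolynomial (Fin n) K}
    (h : ∀ c ∈ f.support, monomial c (1 : K) ∈ J) : f ∈ J := by
  rw [f.as_sum]
  refine Ideal.sum_mem _ fun c hc => ?_
  rw [show monomial c (coeff c f) = C (coeff c f) * monomial c 1 by
    rw [C_mul_monomial, mul_one]]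
  exact Ideal.mul_mem_left _ _ (h c hc)

lemma le_intCl (J : Ideal (MvPolynomial (Fin n) K)) : J ≤ intCl J := by
  intro g hg
  apply Ideal.subset_span
  refine ⟨1, le_refl 1, fun _ => -g, ?_, ?_⟩
  · intro i hi
    rw [Finset.mem_Icc] at hi
    have hi1 : i = 1 := by omega
    subst hi1
    rw [pow_one]
    exact neg_mem hg
  · rw [Finset.Icc_self, Finset.sum_singleton]
    simp

end AuxWeight

/-- For a proper nonzero monomial ideal `I`, an integer `s ≥ 1` and a
vector `a ∈ ℕ^n` with `|a| ≤ γ(I)·s - 1`, one has `√(\overline{Iˢ} : xᵃ) = √I`. -/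
theorem radical_colon_intCl_pow_eq {K : Type} [Field K] {n : ℕ}
    (I : Ideal (MvPolynomial (Fin n) K))
    (hmon : IsMonomialIdeal I) (hbot : I ≠ ⊥) (htop : I ≠ ⊤)
    (s : ℕ) (hs : 1 ≤ s) (a : Fin n →₀ ℕ)
    (ha : (∑ i, (a i : ℤ)) ≤ (gammaI I : ℤ) * (s : ℤ) - 1) :
    Ideal.radical ((intCl (I ^ s)).colon (Ideal.span {monomial a (1 : K)})) =
      Ideal.radical I := by
  obtain ⟨A, hA⟩ := hmon
  set Cl := intCl (I ^ s) with hCl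
  apply le_antisymm
  · -- `≤`: the colon ideal is contained in `√I`.
    have hcol : (Cl.colon (Ideal.span {monomial a (1 : K)})) ≤ I.radical := by
      intro f hf
      have hfa : f * monomial a (1 : K) ∈ Cl := Ideal.mem_colon_span_singleton.mp hf
      by_contra hfrad
      -- pick a monomial of `f` not in `√I`
      obtain ⟨c, hcsupp, hcrad⟩ : ∃ c ∈ f.support, monomial c (1 : K) ∉ I.radical := by
        by_contra hcon; push_neg at hcon
        exact hfrad (mem_ideal_of_monomials hcon)
      set w : Fin n → ℕ := fun j => if c j = 0 then 1 else 0 with hw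
      set t := gammaI I * s with ht
      -- `I ≤ VW w γ(I)`
      have hIVW : I ≤ VW w (gammaI I) := by
        conv_lhs => rw [hA]
        rw [Ideal.span_le]
        rintro _ ⟨a', ha', rfl⟩
        rw [SetLike.mem_coe, mem_VW, phiW_monomial]
        have haI : monomial a' (1 : K) ∈ I := by
          rw [hA]; exact Ideal.subset_span ⟨a', ha', rfl⟩
        obtain ⟨b, hbmin, hba⟩ := exists_minGens_le a' haI
        obtain ⟨j, hbj, hcj⟩ : ∃ j, b j ≠ 0 ∧ c j = 0 := by
          by_contra hcon; push_neg at hcon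
          exact hcrad (monomial_mem_radical_of htop hbmin.1 hcon)
        have hgb : gammaI I ≤ b j := Nat.sInf_le ⟨b, hbmin, j, hbj, rfl⟩
        have hsum : gammaI I ≤ ∑ j', w j' * a' j' := by
          have h1 : w j * a' j = a' j := by rw [hw]; simp [hcj]
          have h2 : b j ≤ a' j := Finsupp.le_def.mp hba j
          calc gammaI I ≤ w j * a' j := by omega
            _ ≤ ∑ j', w j' * a' j' := by
              simpa using Finset.single_le_sum (f := fun j' => w j' * a' j')
                (fun _ _ => Nat.zero_le _) (Finset.mem_univ j)
        exact Dvd.dvd.mul_left (pow_dvd_pow _ hsum) _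
      -- `Cl = intCl (I^s) ≤ VW w t`
      have hCVW : Cl ≤ VW w t := by
        refine intCl_le_VW fun i => ?_
        rw [← pow_mul]
        have h3 := VW_pow hIVW (s * i)
        rwa [← mul_assoc] at h3
      have hdvd : Polynomial.X ^ t ∣ phiW w (f * monomial a (1 : K)) :=
        mem_VW.mp (hCVW hfa)
      rw [map_mul, phiW_monomial] at hdvd
      set d := ∑ j, w j * a j with hd
      have hdle : d ≤ ∑ j, a j :=
        Finset.sum_le_sum fun j _ => by
          rw [hw]; by_cases h : c j = 0 <;> simp [h]
      have hdt : d < t := by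
        have h1 : ((∑ j, a j : ℕ) : ℤ) = ∑ i, (a i : ℤ) := by push_cast; rfl
        have h2 : ((∑ j, a j : ℕ) : ℤ) ≤ (t : ℤ) - 1 := by
          rw [h1, ht]; push_cast; exact ha
        have h3 : (d : ℤ) ≤ ((∑ j, a j : ℕ) : ℤ) := by exact_mod_cast hdle
        omega
      -- cancel `X^d` and deduce the constant coefficient of `phiW w f` vanishes
      have hdvd2 : Polynomial.X ∣ phiW w f * Polynomial.C (monomial a (1 : K)) := by
        have hre : Polynomial.X ^ (t - d - 1 + 1) * Polynomial.X ^ d ∣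
            (phiW w f * Polynomial.C (monomial a (1 : K))) * Polynomial.X ^ d := by
          rw [← pow_add, show t - d - 1 + 1 + d = t by omega, mul_assoc]
          exact hdvd
        have hcan := (mul_dvd_mul_iff_right
          (pow_ne_zero d (Polynomial.X_ne_zero
            (R := MvPolynomial (Fin n) K)))).mp hre
        exact dvd_trans (dvd_pow_self _ (Nat.succ_ne_zero _)) hcan
      rw [Polynomial.X_dvd_iff, Polynomial.mul_coeff_zero, Polynomial.coeff_C_zero] at hdvd2
      have hmono_ne : (monomial a (1 : K) : MvPolynomial (Fin n) K) ≠ 0 := by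
        rw [Ne, monomial_eq_zero]; exact one_ne_zero
      have hc0 : (phiW w f).coeff 0 = 0 := by
        rcases mul_eq_zero.mp hdvd2 with h | h
        · exact h
        · exact absurd h hmono_ne
      -- but the constant coefficient contains the monomial `x^c`
      have hphif : phiW w f = ∑ v ∈ f.support,
          Polynomial.C (monomial v (coeff v f)) * Polynomial.X ^ (∑ j, w j * v j) := by
        conv_lhs => rw [f.as_sum]
        rw [map_sum]
        exact Finset.sum_congr rfl fun v _ => phiW_monomial w v _
      have h0c : (∑ j, w j * c j) = 0 :=
        Finset.sum_eq_zero fun j _ => by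
          rw [hw]; by_cases h : c j = 0 <;> simp [h]
      have hcoeff : MvPolynomial.coeff c ((phiW w f).coeff 0) = MvPolynomial.coeff c f := by
        rw [hphif, Polynomial.finset_sum_coeff, MvPolynomial.coeff_sum]
        rw [Finset.sum_eq_single_of_mem c hcsupp]
        · rw [Polynomial.coeff_C_mul, Polynomial.coeff_X_pow, h0c]
          simp [coeff_monomial]
        · intro v hv hvc
          rw [Polynomial.coeff_C_mul, Polynomial.coeff_X_pow]
          by_cases he : (0 : ℕ) = ∑ j, w j * v j
          · rw [if_pos he, mul_one, coeff_monomial, if_neg hvc]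
          · rw [if_neg he, mul_zero, MvPolynomial.coeff_zero]
      rw [hc0] at hcoeff
      simp only [MvPolynomial.coeff_zero] at hcoeff
      exact (MvPolynomial.mem_support_iff.mp hcsupp) hcoeff.symm
    calc (Cl.colon (Ideal.span {monomial a (1 : K)})).radical
        ≤ (I.radical).radical := Ideal.radical_mono hcol
      _ = I.radical := I.radical_idem
  · -- `≥`
    have h1 : I.radical = (I ^ s).radical :=
      (Ideal.radical_pow I (Nat.one_le_iff_ne_zero.mp hs)).symm
    rw [h1]
    apply Ideal.radical_mono
    intro g hg
    exact Ideal.mem_colon_span_singleton.mpr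
      (Ideal.mul_mem_right _ _ (le_intCl (I ^ s) hg))
end

section
/- Let I be a nonzero proper squarefree monomial ideal of S = K[x_1,…,x_n], let m and k be positive integers, and let j be an integer with m − k ≤ j ≤ m. Then for every vector a ∈ ℕ^n, one has √(I^(m) : x^a) = √(I^(km+j) : x^{(k+1)a}). -/
open MvPolynomial

section AuxRadColon

variable {K : Type} [Field K] {n : ℕ}

/-- The "monomial prime" generated by the variables in `F`. -/
noncomputable def PFa (K : Type) [Field K] {n : ℕ} (F : Finset (Fin n)) :
    Ideal (MvPolynomial (Fin n) K) :=
  Ideal.span ((fun i => (X i : MvPolynomial (Fin n) K)) '' ↑F)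

/-- Substitution sending the variables in `F` to `0`. -/
noncomputable def psia (K : Type) [Field K] {n : ℕ} (F : Finset (Fin n)) :
    MvPolynomial (Fin n) K →ₐ[K] MvPolynomial (Fin n) K :=
  aeval (fun i => if i ∈ F then 0 else X i)

/-- Substitution sending the variables in `F` to `t·xᵢ`. -/
noncomputable def phia (K : Type) [Field K] {n : ℕ} (F : Finset (Fin n)) :
    MvPolynomial (Fin n) K →ₐ[K] Polynomial (MvPolynomial (Fin n) K) :=
  aeval (fun i => if i ∈ F then Polynomial.C (X i) * Polynomial.X else Polynomial.C (X i))

/-- The `F`-weight of an exponent vector. -/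
def wFa {n : ℕ} (F : Finset (Fin n)) (a : Fin n →₀ ℕ) : ℕ := ∑ i ∈ F, a i

lemma X_mem_PFa {F : Finset (Fin n)} {i : Fin n} (hi : i ∈ F) :
    (X i : MvPolynomial (Fin n) K) ∈ PFa K F :=
  Ideal.subset_span ⟨i, hi, rfl⟩

lemma psia_X {F : Finset (Fin n)} (i : Fin n) :
    psia K F (X i) = if i ∈ F then 0 else X i := aeval_X _ i

lemma phia_X {F : Finset (Fin n)} (i : Fin n) :
    phia K F (X i) =
      if i ∈ F then Polynomial.C (X i) * Polynomial.X else Polynomial.C (X i) := aeval_X _ i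

lemma sub_psia_mem (F : Finset (Fin n)) (f : MvPolynomial (Fin n) K) :
    f - psia K F f ∈ PFa K F := by
  induction f using MvPolynomial.induction_on with
  | C c => simp [psia]
  | add f g hf hg =>
      rw [map_add]
      have h := Ideal.add_mem _ hf hg
      have : f + g - (psia K F f + psia K F g)
          = (f - psia K F f) + (g - psia K F g) := by ring
      rw [this]; exact h
  | mul_X f i hf =>
      rw [map_mul, psia_X]
      by_cases hi : i ∈ F
      · rw [if_pos hi, mul_zero, sub_zero]
        exact Ideal.mul_mem_left _ f (X_mem_PFa hi)
      · rw [if_neg hi]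
        have : f * X i - psia K F f * X i = (f - psia K F f) * X i := by ring
        rw [this]
        exact Ideal.mul_mem_right _ _ hf

lemma mem_PFa_iff {F : Finset (Fin n)} {f : MvPolynomial (Fin n) K} :
    f ∈ PFa K F ↔ psia K F f = 0 := by
  constructor
  · intro hf
    have hle : PFa K F ≤ RingHom.ker (psia K F).toRingHom := by
      rw [PFa, Ideal.span_le]
      rintro _ ⟨i, hi, rfl⟩
      simp only [SetLike.mem_coe, RingHom.mem_ker, AlgHom.toRingHom_eq_coe,
        RingHom.coe_coe, psia_X, if_pos (Finset.mem_coe.mp hi)]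
    simpa only [RingHom.mem_ker, AlgHom.toRingHom_eq_coe, RingHom.coe_coe] using hle hf
  · intro h
    have h2 := sub_psia_mem F f
    rwa [h, sub_zero] at h2

lemma PFa_prime (F : Finset (Fin n)) : (PFa K F).IsPrime := by
  have h : PFa K F = RingHom.ker (psia K F).toRingHom := by
    ext f
    rw [RingHom.mem_ker]
    exact mem_PFa_iff
  rw [h]
  exact RingHom.ker_isPrime _

lemma wFa_add (F : Finset (Fin n)) (a b : Fin n →₀ ℕ) :
    wFa F (a + b) = wFa F a + wFa F b := by
  simp [wFa, Finsupp.add_apply, Finset.sum_add_distrib]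

lemma wFa_single (F : Finset (Fin n)) (i : Fin n) (k : ℕ) :
    wFa F (Finsupp.single i k) = if i ∈ F then k else 0 := by
  simp [wFa, Finsupp.single_apply, Finset.sum_ite_eq]

lemma wFa_smul (F : Finset (Fin n)) (c : ℕ) (a : Fin n →₀ ℕ) :
    wFa F (c • a) = c * wFa F a := by
  simp [wFa, Finsupp.smul_apply, Finset.mul_sum]

lemma monomial_factor {a : Fin n →₀ ℕ} {i : Fin n} (h : a i ≠ 0) :
    monomial a (1 : K) = monomial (a - Finsupp.single i 1) 1 * X i := by
  have key : a = (a - Finsupp.single i 1) + Finsupp.single i 1 := by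
    ext j
    by_cases hj : j = i
    · subst hj
      have h1 := Nat.one_le_iff_ne_zero.mpr h
      simp only [Finsupp.add_apply, Finsupp.tsub_apply, Finsupp.single_eq_same]
      omega
    · simp [Finsupp.add_apply, Finsupp.tsub_apply, Finsupp.single_eq_of_ne' (Ne.symm hj)]
  conv_lhs => rw [key]
  rw [monomial_add_single, pow_one]

lemma monomial_mem_PFa_pow {F : Finset (Fin n)} {a : Fin n →₀ ℕ} {t : ℕ} (h : t ≤ wFa F a) :
    monomial a (1 : K) ∈ PFa K F ^ t := by
  induction t generalizing a with
  | zero => simp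
  | succ t ih =>
    have hex : ∃ i ∈ F, a i ≠ 0 := by
      by_contra hc
      push_neg at hc
      have h0 : wFa F a = 0 := Finset.sum_eq_zero hc
      omega
    obtain ⟨i, hiF, hai⟩ := hex
    rw [monomial_factor hai, pow_succ]
    refine Ideal.mul_mem_mul (ih ?_) (X_mem_PFa hiF)
    have e1 : ∀ j ∈ F.erase i, (a - Finsupp.single i 1 : Fin n →₀ ℕ) j = a j := by
      intro j hj
      have hji : j ≠ i := (Finset.mem_erase.mp hj).1
      simp [Finsupp.tsub_apply, Finsupp.single_eq_of_ne' (Ne.symm hji)]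
    have e2 : wFa F (a - Finsupp.single i 1)
        = (a i - 1) + ∑ j ∈ F.erase i, a j := by
      rw [wFa, ← Finset.add_sum_erase F _ hiF]
      congr 1
      · simp [Finsupp.tsub_apply, Finsupp.single_eq_same]
      · exact Finset.sum_congr rfl e1
    have e3 : wFa F a = a i + ∑ j ∈ F.erase i, a j := (Finset.add_sum_erase F _ hiF).symm
    omega

lemma eval_zero_phia (F : Finset (Fin n)) (f : MvPolynomial (Fin n) K) :
    Polynomial.eval 0 (phia K F f) = psia K F f := by
  induction f using MvPolynomial.induction_on with
  | C c => simp [phia, psia]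
  | add f g hf hg => simp [map_add, Polynomial.eval_add, hf, hg]
  | mul_X f i hf =>
      rw [map_mul, Polynomial.eval_mul, hf, phia_X, map_mul, psia_X]
      by_cases hi : i ∈ F <;> simp [hi]

lemma phia_monomial (F : Finset (Fin n)) (a : Fin n →₀ ℕ) :
    phia K F (monomial a (1 : K)) =
      Polynomial.C (monomial a (1 : K)) * Polynomial.X ^ (wFa F a) := by
  induction a using Finsupp.induction with
  | zero => simp [wFa]
  | single_add i k b hib hk ih =>
    have hm : (monomial (Finsupp.single i k + b) (1 : K)) = X i ^ k * monomial b 1 :=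
      monomial_single_add
    have hc : Polynomial.C (X i ^ k * monomial b (1 : K))
        = Polynomial.C (X i : MvPolynomial (Fin n) K) ^ k * Polynomial.C (monomial b (1 : K)) := by
      rw [map_mul, map_pow]
    rw [hm, map_mul, map_pow, phia_X, ih, hc, wFa_add, wFa_single]
    by_cases hi : i ∈ F
    · rw [if_pos hi, if_pos hi, mul_pow, pow_add]
      ring
    · rw [if_neg hi, if_neg hi, zero_add]
      ring

lemma not_X_dvd_phia {F : Finset (Fin n)} {s : MvPolynomial (Fin n) K} (hs : s ∉ PFa K F) :
    ¬ (Polynomial.X ∣ phia K F s) := by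
  rw [Polynomial.X_dvd_iff, Polynomial.coeff_zero_eq_eval_zero, eval_zero_phia]
  exact fun h => hs (mem_PFa_iff.mpr h)

lemma phia_pow_dvd {F : Finset (Fin n)} {f : MvPolynomial (Fin n) K} {t : ℕ}
    (h : f ∈ PFa K F ^ t) : Polynomial.X ^ t ∣ phia K F f := by
  have h1 : Ideal.map (phia K F).toRingHom (PFa K F)
      ≤ Ideal.span {(Polynomial.X : Polynomial (MvPolynomial (Fin n) K))} := by
    rw [PFa, Ideal.map_span, Ideal.span_le]
    rintro _ ⟨_, ⟨i, hi, rfl⟩, rfl⟩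
    rw [SetLike.mem_coe, Ideal.mem_span_singleton]
    show Polynomial.X ∣ phia K F (X i)
    rw [phia_X, if_pos (Finset.mem_coe.mp hi)]
    exact dvd_mul_left _ _
  have h2 : phia K F f ∈ Ideal.span
      {(Polynomial.X : Polynomial (MvPolynomial (Fin n) K))} ^ t := by
    have h3 := Ideal.mem_map_of_mem (phia K F).toRingHom h
    rw [Ideal.map_pow] at h3
    exact Ideal.pow_right_mono h1 t h3
  rwa [Ideal.span_singleton_pow, Ideal.mem_span_singleton] at h2

lemma key_valuation {F : Finset (Fin n)} {s g : MvPolynomial (Fin n) K}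
    {a : Fin n →₀ ℕ} {t : ℕ}
    (hs : s ∉ PFa K F) (hg : g ∉ PFa K F) (h : s * g * monomial a 1 ∈ PFa K F ^ t) :
    t ≤ wFa F a := by
  by_contra hlt
  push_neg at hlt
  have hd := phia_pow_dvd h
  rw [map_mul, map_mul, phia_monomial] at hd
  set w := wFa F a with hw
  set P := phia K F s * phia K F g * Polynomial.C (monomial a (1 : K)) with hP
  have heq : phia K F s * phia K F g *
      (Polynomial.C (monomial a (1 : K)) * Polynomial.X ^ w) = Polynomial.X ^ w * P := by
    rw [hP]; ring
  rw [heq] at hd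
  have hd2 : Polynomial.X ^ w * Polynomial.X ^ (t - w) ∣ Polynomial.X ^ w * P := by
    rw [← pow_add, show w + (t - w) = t from by omega]
    exact hd
  have hXw : (Polynomial.X : Polynomial (MvPolynomial (Fin n) K)) ^ w ≠ 0 :=
    pow_ne_zero _ Polynomial.X_ne_zero
  have hdvd : Polynomial.X ^ (t - w) ∣ P := (mul_dvd_mul_iff_left hXw).mp hd2
  have hX1 : Polynomial.X ∣ P :=
    dvd_trans (dvd_pow_self _ (show t - w ≠ 0 by omega)) hdvd
  rcases (Polynomial.prime_X.dvd_mul.mp hX1) with h1 | h2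
  · rcases (Polynomial.prime_X.dvd_mul.mp h1) with h3 | h4
    · exact not_X_dvd_phia hs h3
    · exact not_X_dvd_phia hg h4
  · rw [Polynomial.X_dvd_iff, Polynomial.coeff_C, if_pos rfl] at h2
    exact one_ne_zero (monomial_eq_zero.mp h2)

lemma psia_monomial (F : Finset (Fin n)) (a : Fin n →₀ ℕ) :
    psia K F (monomial a (1 : K)) =
      if (∀ i ∈ F, a i = 0) then monomial a 1 else 0 := by
  by_cases hcond : ∀ i ∈ F, a i = 0
  · rw [if_pos hcond]
    rw [psia, aeval_monomial, map_one, one_mul]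
    conv_rhs => rw [monomial_eq, C_1, one_mul]
    apply Finsupp.prod_congr
    intro i hi
    rw [if_neg]
    intro hiF
    exact Finsupp.mem_support_iff.mp hi (hcond i hiF)
  · rw [if_neg hcond]
    push_neg at hcond
    obtain ⟨i, hiF, hai⟩ := hcond
    rw [psia, aeval_monomial, map_one, one_mul, Finsupp.prod]
    apply Finset.prod_eq_zero (Finsupp.mem_support_iff.mpr hai)
    rw [if_pos hiF]
    exact zero_pow hai

/-- The set of indices of variables belonging to `p`. -/
noncomputable def Fpa {K : Type} [Field K] {n : ℕ} (p : Ideal (MvPolynomial (Fin n) K)) :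
    Finset (Fin n) :=
  @Finset.filter _ (fun i => X i ∈ p) (Classical.decPred _) Finset.univ

lemma mem_Fpa {p : Ideal (MvPolynomial (Fin n) K)} {i : Fin n} :
    i ∈ Fpa p ↔ X i ∈ p := by
  simp [Fpa, Finset.mem_filter]

lemma monomial_mem_prime {p : Ideal (MvPolynomial (Fin n) K)} (hp' : p.IsPrime)
    {a : Fin n →₀ ℕ} (h : monomial a (1 : K) ∈ p) : ∃ i, a i ≠ 0 ∧ X i ∈ p := by
  rw [monomial_eq, C_1, one_mul, Finsupp.prod] at h
  haveI := hp'
  obtain ⟨i, hi, hXi⟩ := Ideal.IsPrime.prod_mem_iff.mp h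
  have hne := Finsupp.mem_support_iff.mp hi
  exact ⟨i, hne, (hp'.pow_mem_iff_mem _ (Nat.pos_of_ne_zero hne)).mp hXi⟩

lemma minPrime_eq {I p : Ideal (MvPolynomial (Fin n) K)}
    {A : Set (Fin n →₀ ℕ)}
    (hAI : I = Ideal.span ((fun a => (monomial a (1 : K))) '' A))
    (hp : p ∈ I.minimalPrimes) : p = PFa K (Fpa p) := by
  have hprime : p.IsPrime := hp.1.1
  have hIp : I ≤ p := hp.1.2
  have h1 : PFa K (Fpa p) ≤ p := by
    rw [PFa, Ideal.span_le]
    rintro _ ⟨i, hi, rfl⟩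
    exact mem_Fpa.mp (Finset.mem_coe.mp hi)
  have h2 : I ≤ PFa K (Fpa p) := by
    rw [hAI, Ideal.span_le]
    rintro _ ⟨a, hA, rfl⟩
    have hmem : monomial a (1 : K) ∈ p := hIp (hAI ▸ Ideal.subset_span ⟨a, hA, rfl⟩)
    obtain ⟨i, hai, hXi⟩ := monomial_mem_prime hprime hmem
    show monomial a (1 : K) ∈ PFa K (Fpa p)
    rw [monomial_factor hai]
    exact Ideal.mul_mem_left _ _ (X_mem_PFa (mem_Fpa.mpr hXi))
  exact (hp.2 ⟨PFa_prime _, h2⟩ h1).antisymm h1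

lemma exists_compl_mul_X_mem {I p : Ideal (MvPolynomial (Fin n) K)}
    {A : Set (Fin n →₀ ℕ)} (hA1 : ∀ a ∈ A, ∀ i, a i ≤ 1)
    (hAI : I = Ideal.span ((fun a => (monomial a (1 : K))) '' A))
    (hp : p ∈ I.minimalPrimes) {i : Fin n} (hi : i ∈ Fpa p) :
    ∃ s, s ∉ p ∧ s * X i ∈ I := by
  have hpeq := minPrime_eq hAI hp
  set F := Fpa p with hF
  set F' := F.erase i with hF'
  have hni : (X i : MvPolynomial (Fin n) K) ∉ PFa K F' := by
    rw [mem_PFa_iff, psia_X, if_neg (Finset.notMem_erase i F)]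
    exact X_ne_zero i
  have hsub : PFa K F' ≤ p := by
    rw [hpeq]
    apply Ideal.span_mono
    apply Set.image_mono
    intro j hj
    exact Finset.mem_coe.mpr (Finset.mem_of_mem_erase (Finset.mem_coe.mp hj))
  have hInot : ¬ I ≤ PFa K F' := by
    intro hle
    have hmin := hp.2 ⟨PFa_prime _, hle⟩ hsub
    exact hni (hmin (hpeq ▸ X_mem_PFa hi))
  have hgen : ∃ a ∈ A, monomial a (1 : K) ∉ PFa K F' := by
    by_contra hc
    push_neg at hc
    apply hInot
    rw [hAI, Ideal.span_le]
    rintro _ ⟨a, hA, rfl⟩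
    exact hc a hA
  obtain ⟨a, hA, hnot⟩ := hgen
  have hmemp : monomial a (1 : K) ∈ PFa K F :=
    hpeq ▸ hp.1.2 (hAI ▸ Ideal.subset_span ⟨a, hA, rfl⟩)
  have h0 : ¬ (∀ i' ∈ F, a i' = 0) := by
    intro hall
    have := mem_PFa_iff.mp hmemp
    rw [psia_monomial, if_pos hall] at this
    exact one_ne_zero (monomial_eq_zero.mp this)
  have hF'0 : ∀ i' ∈ F', a i' = 0 := by
    by_contra hc
    apply hnot
    rw [mem_PFa_iff, psia_monomial, if_neg hc]
  push_neg at h0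
  obtain ⟨i₀, hi₀F, hi₀⟩ := h0
  have hii : i₀ = i := by
    by_contra hne
    exact hi₀ (hF'0 i₀ (Finset.mem_erase.mpr ⟨hne, hi₀F⟩))
  subst hii
  have hai1 : a i₀ = 1 := le_antisymm (hA1 a hA i₀) (Nat.one_le_iff_ne_zero.mpr hi₀)
  refine ⟨monomial (a - Finsupp.single i₀ 1) 1, ?_, ?_⟩
  · rw [hpeq, mem_PFa_iff, psia_monomial, if_pos]
    · exact fun h => one_ne_zero (monomial_eq_zero.mp h)
    · intro i' hi'
      by_cases hio : i' = i₀
      · subst hio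
        simp [Finsupp.tsub_apply, Finsupp.single_apply, hai1]
      · have hz : a i' = 0 := hF'0 i' (Finset.mem_erase.mpr ⟨hio, hi'⟩)
        simp [Finsupp.tsub_apply, Finsupp.single_apply, Ne.symm hio, hz]
  · rw [← monomial_factor hi₀, hAI]
    exact Ideal.subset_span ⟨a, hA, rfl⟩

lemma mem_comap_map_iff {p : Ideal (MvPolynomial (Fin n) K)} (hP : p.IsPrime)
    (J : Ideal (MvPolynomial (Fin n) K)) (g : MvPolynomial (Fin n) K) :
    g ∈ Ideal.comap (algebraMap (MvPolynomial (Fin n) K)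
        (Localization (@Ideal.primeCompl _ _ p hP)))
        (J.map (algebraMap (MvPolynomial (Fin n) K)
          (Localization (@Ideal.primeCompl _ _ p hP)))) ↔
      ∃ s, s ∉ p ∧ s * g ∈ J := by
  rw [Ideal.mem_comap]
  constructor
  · intro h
    rw [IsLocalization.mem_map_algebraMap_iff (@Ideal.primeCompl _ _ p hP)] at h
    obtain ⟨⟨⟨x, hx⟩, ⟨sm, hsm⟩⟩, he⟩ := h
    rw [← map_mul, IsLocalization.eq_iff_exists (@Ideal.primeCompl _ _ p hP)] at he
    obtain ⟨⟨c, hc⟩, hce⟩ := he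
    refine ⟨c * sm, (@Ideal.primeCompl _ _ p hP).mul_mem hc hsm, ?_⟩
    have : (c * sm) * g = c * (g * sm) := by ring
    rw [this, hce]
    exact J.mul_mem_left c hx
  · rintro ⟨s, hs, hsg⟩
    have h1 : algebraMap (MvPolynomial (Fin n) K)
        (Localization (@Ideal.primeCompl _ _ p hP)) (s * g)
        ∈ J.map (algebraMap _ _) := Ideal.mem_map_of_mem _ hsg
    have hu : IsUnit (algebraMap (MvPolynomial (Fin n) K)
        (Localization (@Ideal.primeCompl _ _ p hP)) s) :=
      IsLocalization.map_units _ (⟨s, hs⟩ : (@Ideal.primeCompl _ _ p hP))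
    obtain ⟨u, hu⟩ := hu
    have heq : algebraMap (MvPolynomial (Fin n) K)
        (Localization (@Ideal.primeCompl _ _ p hP)) g
        = ↑u⁻¹ * algebraMap _ _ (s * g) := by
      rw [map_mul, ← hu, ← mul_assoc, Units.inv_mul, one_mul]
    rw [heq]
    exact Ideal.mul_mem_left _ _ h1

lemma PFa_pow_le_comap {I p : Ideal (MvPolynomial (Fin n) K)}
    {A : Set (Fin n →₀ ℕ)} (hA1 : ∀ a ∈ A, ∀ i, a i ≤ 1)
    (hAI : I = Ideal.span ((fun a => (monomial a (1 : K))) '' A))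
    (hp : p ∈ I.minimalPrimes) (t : ℕ) :
    PFa K (Fpa p) ^ t ≤ Ideal.comap (algebraMap (MvPolynomial (Fin n) K)
        (Localization (@Ideal.primeCompl _ _ p hp.1.1)))
      ((I ^ t).map (algebraMap (MvPolynomial (Fin n) K)
        (Localization (@Ideal.primeCompl _ _ p hp.1.1)))) := by
  set L := Localization (@Ideal.primeCompl _ _ p hp.1.1)
  have h1 : PFa K (Fpa p) ≤ Ideal.comap (algebraMap (MvPolynomial (Fin n) K) L)
      (I.map (algebraMap (MvPolynomial (Fin n) K) L)) := by
    rw [PFa, Ideal.span_le]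
    rintro _ ⟨i, hi, rfl⟩
    obtain ⟨s, hs, hsX⟩ := exists_compl_mul_X_mem hA1 hAI hp (Finset.mem_coe.mp hi)
    exact (mem_comap_map_iff hp.1.1 I _).mpr ⟨s, hs, hsX⟩
  calc PFa K (Fpa p) ^ t
      ≤ (Ideal.comap (algebraMap (MvPolynomial (Fin n) K) L)
          (I.map (algebraMap (MvPolynomial (Fin n) K) L))) ^ t := Ideal.pow_right_mono h1 t
    _ ≤ Ideal.comap (algebraMap (MvPolynomial (Fin n) K) L)
          ((I.map (algebraMap (MvPolynomial (Fin n) K) L)) ^ t) := by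
        apply Ideal.map_le_iff_le_comap.mp
        rw [Ideal.map_pow]
        exact Ideal.pow_right_mono Ideal.map_comap_le t
    _ = Ideal.comap (algebraMap (MvPolynomial (Fin n) K) L)
          ((I ^ t).map (algebraMap (MvPolynomial (Fin n) K) L)) := by
        rw [Ideal.map_pow]

end AuxRadColon


lemma core_radical_colon {K : Type} [Field K] {n : ℕ} {I : Ideal (MvPolynomial (Fin n) K)}
    {A : Set (Fin n →₀ ℕ)} (hA1 : ∀ a ∈ A, ∀ i, a i ≤ 1)
    (hAI : I = Ideal.span ((fun a => (monomial a (1 : K))) '' A))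
    (m : ℕ) (a : Fin n →₀ ℕ) (t : ℕ) (ht : 1 ≤ t) (b : Fin n →₀ ℕ)
    (hcond : ∀ p ∈ I.minimalPrimes, (wFa (Fpa p) b < t ↔ wFa (Fpa p) a < m)) :
    Ideal.radical ((symbolicPower I t).colon (Ideal.span {monomial b (1 : K)})) =
      ⨅ (p : Ideal (MvPolynomial (Fin n) K)) (_ : p ∈ I.minimalPrimes)
        (_ : wFa (Fpa p) a < m), p := by
  apply le_antisymm
  · refine le_iInf fun p => le_iInf fun hp => le_iInf fun hw => ?_
    have hpeq := minPrime_eq hAI hp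
    have hb : wFa (Fpa p) b < t := (hcond p hp).mpr hw
    have hsub : (symbolicPower I t).colon (Ideal.span {monomial b (1 : K)}) ≤ p := by
      intro g hg
      rw [Ideal.mem_colon_span_singleton] at hg
      rw [symbolicPower, Submodule.mem_iInf] at hg
      have hg2 := (Submodule.mem_iInf _).mp (hg p) hp
      obtain ⟨s, hs, hmem⟩ := (mem_comap_map_iff hp.1.1 _ _).mp hg2
      by_cases hgp : g ∈ p
      · exact hgp
      · exfalso
        have hIpow : I ^ t ≤ PFa K (Fpa p) ^ t :=
          Ideal.pow_right_mono (le_trans hp.1.2 (le_of_eq hpeq)) t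
        have hmem2 : s * g * monomial b 1 ∈ PFa K (Fpa p) ^ t := by
          rw [mul_assoc]
          exact hIpow hmem
        have hkey := key_valuation (F := Fpa p) (hpeq ▸ hs) (hpeq ▸ hgp) hmem2
        omega
    calc Ideal.radical ((symbolicPower I t).colon (Ideal.span {monomial b (1 : K)}))
        ≤ Ideal.radical p := Ideal.radical_mono hsub
      _ = p := hp.1.1.radical
  · intro g hg
    refine ⟨t, ?_⟩
    rw [Ideal.mem_colon_span_singleton, symbolicPower, Submodule.mem_iInf]
    intro p
    rw [Submodule.mem_iInf]
    intro hp
    have hpeq := minPrime_eq hAI hp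
    by_cases hw : wFa (Fpa p) a < m
    · have hgp : g ∈ p := by
        have hle : (⨅ (p : Ideal (MvPolynomial (Fin n) K)) (_ : p ∈ I.minimalPrimes)
            (_ : wFa (Fpa p) a < m), p) ≤ p :=
          iInf_le_of_le p (iInf_le_of_le hp (iInf_le _ hw))
        exact hle hg
      have hgt : g ^ t ∈ PFa K (Fpa p) ^ t := by
        rw [← hpeq]
        exact Ideal.pow_mem_pow hgp t
      exact Ideal.mul_mem_right _ _ (PFa_pow_le_comap hA1 hAI hp t hgt)
    · have hbt : t ≤ wFa (Fpa p) b := not_lt.mp (fun hlt => hw ((hcond p hp).mp hlt))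
      have hmb : monomial b (1 : K) ∈ PFa K (Fpa p) ^ t := monomial_mem_PFa_pow hbt
      exact Ideal.mul_mem_left _ _ (PFa_pow_le_comap hA1 hAI hp t hmb)

/-- For a nonzero proper squarefree monomial ideal `I`, positive integers
`m, k`, an integer `j` with `m - k ≤ j ≤ m` and every `a ∈ ℕ^n`,
`√(I^(m) : xᵃ) = √(I^(km+j) : x^{(k+1)a})`. -/
theorem radical_colon_symbolicPower_eq {K : Type} [Field K] {n : ℕ}
    (I : Ideal (MvPolynomial (Fin n) K))
    (hsf : IsSquarefreeMonomialIdeal I) (hbot : I ≠ ⊥) (htop : I ≠ ⊤)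
    (m k : ℕ) (hm : 1 ≤ m) (hk : 1 ≤ k)
    (j : ℤ) (hj1 : (m : ℤ) - (k : ℤ) ≤ j) (hj2 : j ≤ (m : ℤ))
    (a : Fin n →₀ ℕ) :
    Ideal.radical ((symbolicPower I m).colon (Ideal.span {monomial a (1 : K)})) =
      Ideal.radical ((symbolicPower I ((k * m + j).toNat)).colon
        (Ideal.span {monomial ((k + 1) • a) (1 : K)})) := by
  obtain ⟨A, hA1, hAI⟩ := hsf
  have hnn : (0 : ℤ) ≤ (k : ℤ) * m + j := by nlinarith [hj1, hj2, (by exact_mod_cast hm : (1:ℤ) ≤ m), (by exact_mod_cast hk : (1:ℤ) ≤ k)]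
  have hM : (((k * m + j).toNat : ℤ)) = (k : ℤ) * m + j := Int.toNat_of_nonneg hnn
  have ht1 : 1 ≤ ((k : ℤ) * m + j).toNat := by
    have hm' : (1:ℤ) ≤ m := by exact_mod_cast hm
    have hk' : (1:ℤ) ≤ k := by exact_mod_cast hk
    have : (1 : ℤ) ≤ (k : ℤ) * m + j := by nlinarith [hj1]
    omega
  have key : ∀ s : ℕ, ((k + 1) * s < ((k : ℤ) * m + j).toNat ↔ s < m) := by
    intro s
    have hm' : (1:ℤ) ≤ m := by exact_mod_cast hm
    have hk' : (1:ℤ) ≤ k := by exact_mod_cast hk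
    have hcast : ((k + 1) * s < ((k : ℤ) * m + j).toNat) ↔
        (((k : ℤ) + 1) * s < (k : ℤ) * m + j) := by
      rw [← hM]
      constructor
      · intro h; exact_mod_cast h
      · intro h; exact_mod_cast h
    rw [hcast]
    constructor
    · intro h
      by_contra h'
      push_neg at h'
      have hs' : (m : ℤ) ≤ s := by exact_mod_cast h'
      nlinarith [hj2]
    · intro h
      have hs' : (s : ℤ) ≤ (m : ℤ) - 1 := by
        have : (s : ℤ) < m := by exact_mod_cast h
        omega
      nlinarith [hj1]
  rw [core_radical_colon hA1 hAI m a m hm a (fun p _ => Iff.rfl),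
      core_radical_colon hA1 hAI m a ((k * m + j).toNat) ht1 ((k + 1) • a)
        (fun p _ => by rw [wFa_smul]; exact key _)]
end

section
/- Let I be a proper nonzero monomial ideal of S = K[x_1,…,x_n], and let s ≥ 1 be an integer such that u^s ∈ I^s for every monomial u ∈ G(\overline{I}). Then for every integer m ≥ 1 and every vector a ∈ ℕ^n, one has √(\overline{I} : x^a) = √(I^{sm} : x^{(sm)a}). -/
open MvPolynomial

set_option maxHeartbeats 1000000
set_option synthInstance.maxHeartbeats 200000

namespace StmtAux

variable {F : Type} [Field F] {n : ℕ}

/-- the defining set of `intCl` -/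
def gset (I : Ideal (MvPolynomial (Fin n) F)) : Set (MvPolynomial (Fin n) F) :=
  {f | ∃ k : ℕ, 1 ≤ k ∧ ∃ c : ℕ → MvPolynomial (Fin n) F,
    (∀ i ∈ Finset.Icc 1 k, c i ∈ I ^ i) ∧
    f ^ k + ∑ i ∈ Finset.Icc 1 k, c i * f ^ (k - i) = 0}

lemma intCl_eq_span_gset (I : Ideal (MvPolynomial (Fin n) F)) :
    intCl I = Ideal.span (gset I) := rfl

/-- `k`-fold sumsets of a set of exponent vectors -/
def iterSum (A : Set (Fin n →₀ ℕ)) : ℕ → Set (Fin n →₀ ℕ)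
  | 0 => {0}
  | k+1 => {x | ∃ a ∈ A, ∃ b ∈ iterSum A k, x = a + b}

lemma span_monomial_pow (A : Set (Fin n →₀ ℕ)) (k : ℕ) :
    (Ideal.span ((fun a => monomial a (1:F)) '' A)) ^ k
      = Ideal.span ((fun a => monomial a (1:F)) '' (iterSum A k)) := by
  induction k with
  | zero =>
      rw [pow_zero, iterSum, Set.image_singleton]
      rw [show (monomial (0 : Fin n →₀ ℕ) (1:F)) = 1 from rfl]
      rw [Ideal.span_singleton_one, Ideal.one_eq_top]
  | succ k ih =>
      rw [pow_succ, ih, Ideal.span_mul_span]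
      congr 1
      ext x
      simp only [Set.mem_iUnion, Set.mem_image, Set.mem_singleton_iff]
      constructor
      · rintro ⟨s, ⟨b, hb, rfl⟩, t, ⟨a, ha, rfl⟩, rfl⟩
        refine ⟨a + b, ⟨a, ha, b, hb, rfl⟩, ?_⟩
        dsimp only; rw [monomial_mul, one_mul, add_comm]
      · rintro ⟨y, ⟨a, ha, b, hb, rfl⟩, rfl⟩
        refine ⟨monomial b 1, ⟨b, hb, rfl⟩, monomial a 1, ⟨a, ha, rfl⟩, ?_⟩
        dsimp only; rw [monomial_mul, one_mul, add_comm]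

lemma mem_pow_iff {A : Set (Fin n →₀ ℕ)} {k : ℕ} {p : MvPolynomial (Fin n) F} :
    p ∈ (Ideal.span ((fun a => monomial a (1:F)) '' A)) ^ k ↔
      ∀ w ∈ p.support, ∃ b ∈ iterSum A k, b ≤ w := by
  rw [span_monomial_pow, mem_ideal_span_monomial_image]

lemma monomial_mem_pow_iff {A : Set (Fin n →₀ ℕ)} {k : ℕ} {w : Fin n →₀ ℕ} {c : F}
    (hc : c ≠ 0) :
    monomial w c ∈ (Ideal.span ((fun a => monomial a (1:F)) '' A)) ^ k ↔
      ∃ b ∈ iterSum A k, b ≤ w := by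
  classical
  rw [mem_pow_iff, support_monomial, if_neg hc]
  simp

lemma smul_le_smul_right {i k : ℕ} (h : i ≤ k) (w : Fin n →₀ ℕ) : i • w ≤ k • w := by
  intro j
  simp only [Finsupp.smul_apply, smul_eq_mul]
  exact Nat.mul_le_mul_right _ h

lemma smul_sub_smul {i k : ℕ} (h : i ≤ k) (w : Fin n →₀ ℕ) :
    k • w - (k - i) • w = i • w := by
  ext j
  simp only [Finsupp.tsub_apply, Finsupp.smul_apply, smul_eq_mul]
  have : k * w j = (k - i) * w j + i * w j := by
    rw [← Nat.add_mul]; congr 1; omega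
  omega

/-- the key cancellation lemma: a monomial integral over a monomial ideal has a power
in the corresponding power of the ideal -/
lemma monomial_gset {A : Set (Fin n →₀ ℕ)} {w : Fin n →₀ ℕ}
    (hw : monomial w (1:F) ∈ gset (Ideal.span ((fun a => monomial a (1:F)) '' A))) :
    ∃ k, 1 ≤ k ∧ monomial (k • w) (1:F)
      ∈ (Ideal.span ((fun a => monomial a (1:F)) '' A)) ^ k := by
  obtain ⟨k, hk, c, hc, heq⟩ := hw
  have h0 := congrArg (coeff (k • w)) heq
  rw [coeff_add, coeff_zero, monomial_pow, one_pow, coeff_monomial, if_pos rfl,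
    coeff_sum] at h0
  have hterm : ∀ i ∈ Finset.Icc 1 k,
      coeff (k • w) (c i * (monomial w (1:F)) ^ (k - i)) = coeff (i • w) (c i) := by
    intro i hi
    obtain ⟨hi1, hik⟩ := Finset.mem_Icc.mp hi
    rw [monomial_pow, one_pow, coeff_mul_monomial', if_pos (smul_le_smul_right (Nat.sub_le k i) w),
      smul_sub_smul hik, mul_one]
  rw [Finset.sum_congr rfl hterm] at h0
  have hex : ∃ i ∈ Finset.Icc 1 k, coeff (i • w) (c i) ≠ 0 := by
    by_contra hcon
    push_neg at hcon
    rw [Finset.sum_eq_zero hcon, add_zero] at h0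
    exact one_ne_zero h0
  obtain ⟨i, hi, hne⟩ := hex
  obtain ⟨hi1, hik⟩ := Finset.mem_Icc.mp hi
  have hci := hc i hi
  rw [mem_pow_iff] at hci
  obtain ⟨b, hb, hble⟩ := hci (i • w) (mem_support_iff.mpr hne)
  exact ⟨i, hi1, (monomial_mem_pow_iff one_ne_zero).mpr ⟨b, hb, hble⟩⟩


lemma rees_algebraMap (I : Ideal (MvPolynomial (Fin n) F)) (x : ↥(reesAlgebra I)) :
    algebraMap ↥(reesAlgebra I) (Polynomial (MvPolynomial (Fin n) F)) x = ↑x := rfl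

lemma CfX_pow (f : MvPolynomial (Fin n) F) (m : ℕ) :
    (Polynomial.C f * Polynomial.X) ^ m = Polynomial.C (f ^ m) * Polynomial.X ^ m := by
  rw [mul_pow, map_pow]

lemma mem_gset_iff_isIntegral {I : Ideal (MvPolynomial (Fin n) F)}
    {f : MvPolynomial (Fin n) F} :
    f ∈ gset I ↔ IsIntegral (reesAlgebra I) (Polynomial.C f * Polynomial.X) := by
  classical
  constructor
  · rintro ⟨k, hk, c, hc, heq⟩
    set c' : ℕ → MvPolynomial (Fin n) F :=
      fun i => if i ∈ Finset.Icc 1 k then c i else 0 with hc'def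
    have hc'mem : ∀ i, c' i ∈ I ^ i := by
      intro i
      by_cases h : i ∈ Finset.Icc 1 k
      · rw [hc'def]; simpa [h] using hc i h
      · rw [hc'def]; simp [h]
    set r : ℕ → ↥(reesAlgebra I) :=
      fun i => ⟨Polynomial.monomial i (c' i), reesAlgebra.monomial_mem.mpr (hc'mem i)⟩ with hrdef
    refine ⟨Polynomial.X ^ k + ∑ i ∈ Finset.Icc 1 k, Polynomial.monomial (k - i) (r i), ?_, ?_⟩
    · apply Polynomial.monic_X_pow_add
      refine lt_of_le_of_lt (Polynomial.degree_sum_le _ _) ?_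
      rw [Finset.sup_lt_iff (by exact_mod_cast WithBot.bot_lt_coe k)]
      intro i hi
      refine lt_of_le_of_lt (Polynomial.degree_monomial_le _ _) ?_
      have h1 := (Finset.mem_Icc.mp hi).1
      exact_mod_cast (show k - i < k by omega)
    · rw [← Polynomial.aeval_def, map_add, map_pow, Polynomial.aeval_X, map_sum]
      have hterm : ∀ i ∈ Finset.Icc 1 k,
          Polynomial.aeval (Polynomial.C f * Polynomial.X) (Polynomial.monomial (k - i) (r i))
            = Polynomial.C (c i * f ^ (k - i)) * Polynomial.X ^ k := by
        intro i hi
        obtain ⟨h1, h2⟩ := Finset.mem_Icc.mp hi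
        rw [Polynomial.aeval_monomial, CfX_pow, rees_algebraMap]
        show (Polynomial.monomial i (c' i) : Polynomial (MvPolynomial (Fin n) F)) *
          (Polynomial.C (f ^ (k - i)) * Polynomial.X ^ (k - i)) = _
        rw [← Polynomial.C_mul_X_pow_eq_monomial]
        have hck : c' i = c i := if_pos hi
        rw [hck, mul_mul_mul_comm, ← map_mul, ← pow_add, Nat.add_sub_cancel' h2]
      rw [Finset.sum_congr rfl hterm, CfX_pow, ← Finset.sum_mul, ← map_sum, ← add_mul,
        ← map_add, heq, map_zero, zero_mul]
  · rintro ⟨p, hmon, heval⟩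
    rw [← Polynomial.aeval_def] at heval
    set k := p.natDegree with hkdef
    have hk : 1 ≤ k := by
      by_contra hcon
      have hk0 : k = 0 := by omega
      have h1 := Polynomial.eq_one_of_monic_natDegree_zero hmon hk0
      rw [h1, map_one] at heval
      exact one_ne_zero heval
    have hsum := Polynomial.aeval_eq_sum_range (p := p) (Polynomial.C f * Polynomial.X)
    rw [heval] at hsum
    have hco := congrArg (fun q => Polynomial.coeff q k) hsum
    simp only [Polynomial.coeff_zero, Polynomial.finset_sum_coeff] at hco
    have hterm : ∀ i ∈ Finset.range (k + 1),
        (p.coeff i • (Polynomial.C f * Polynomial.X) ^ i).coeff k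
          = ((p.coeff i : Polynomial (MvPolynomial (Fin n) F)).coeff (k - i)) * f ^ i := by
      intro i hi
      have hik : i ≤ k := Finset.mem_range_succ_iff.mp hi
      rw [Algebra.smul_def, rees_algebraMap, CfX_pow, ← mul_assoc,
        Polynomial.coeff_mul_X_pow', if_pos hik, Polynomial.coeff_mul_C]
    rw [Finset.sum_congr rfl hterm, Finset.sum_range_succ] at hco
    have hlead : ((p.coeff k : ↥(reesAlgebra I)) : Polynomial (MvPolynomial (Fin n) F)) = 1 := by
      have hcn := hmon.coeff_natDegree
      rw [← hkdef] at hcn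
      rw [hcn, OneMemClass.coe_one]
    rw [hlead, Nat.sub_self, Polynomial.coeff_one_zero, one_mul] at hco
    refine ⟨k, hk, fun j => ((p.coeff (k - j) : Polynomial (MvPolynomial (Fin n) F)).coeff j),
      fun j _ => (p.coeff (k - j)).2 j, ?_⟩
    have hsb : ∑ i ∈ Finset.range k,
          ((p.coeff i : Polynomial (MvPolynomial (Fin n) F)).coeff (k - i)) * f ^ i
        = ∑ j ∈ Finset.Icc 1 k,
          ((p.coeff (k - j) : Polynomial (MvPolynomial (Fin n) F)).coeff j) * f ^ (k - j) := by
      refine Finset.sum_nbij' (fun i => k - i) (fun j => k - j) ?_ ?_ ?_ ?_ ?_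
      · intro a ha; have := Finset.mem_range.mp ha
        show k - a ∈ Finset.Icc 1 k; rw [Finset.mem_Icc]; omega
      · intro a ha; have := Finset.mem_Icc.mp ha
        show k - a ∈ Finset.range k; rw [Finset.mem_range]; omega
      · intro a ha; have := Finset.mem_range.mp ha; show k - (k - a) = a; omega
      · intro a ha; have := Finset.mem_Icc.mp ha; show k - (k - a) = a; omega
      · intro a ha; have h1 := Finset.mem_range.mp ha
        show _ = ((p.coeff (k - (k - a)) : Polynomial (MvPolynomial (Fin n) F)).coeff (k - a)) * f ^ (k - (k - a))
        rw [show k - (k - a) = a by omega]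
    rw [← hsb, add_comm]
    exact hco.symm

lemma mem_intCl_iff {I : Ideal (MvPolynomial (Fin n) F)} {f : MvPolynomial (Fin n) F} :
    f ∈ intCl I ↔ f ∈ gset I := by
  constructor
  · intro hf
    rw [mem_gset_iff_isIntegral]
    refine Submodule.span_induction
      (p := fun x _ => IsIntegral (reesAlgebra I) (Polynomial.C x * Polynomial.X))
      ?_ ?_ ?_ ?_ hf
    · intro x hx
      exact mem_gset_iff_isIntegral.mp hx
    · show IsIntegral (reesAlgebra I) (Polynomial.C (0 : MvPolynomial (Fin n) F) * Polynomial.X)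
      rw [map_zero, zero_mul]; exact isIntegral_zero
    · intro x y _ _ hx hy
      show IsIntegral (reesAlgebra I) (Polynomial.C (x + y) * Polynomial.X)
      rw [map_add, add_mul]; exact hx.add hy
    · intro a x _ hx
      show IsIntegral (reesAlgebra I) (Polynomial.C (a • x) * Polynomial.X)
      rw [smul_eq_mul, map_mul, mul_assoc]
      have hmem : (Polynomial.C a : Polynomial (MvPolynomial (Fin n) F)) ∈ reesAlgebra I := by
        rw [← Polynomial.monomial_zero_left]
        exact reesAlgebra.monomial_mem.mpr (by simp)
      have ha := isIntegral_algebraMap (R := ↥(reesAlgebra I))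
          (A := Polynomial (MvPolynomial (Fin n) F)) (x := ⟨_, hmem⟩)
      rw [rees_algebraMap] at ha
      exact ha.mul hx
  · intro h
    exact Ideal.subset_span h


lemma monomial_mem_gset_of_pow {I : Ideal (MvPolynomial (Fin n) F)} {u : Fin n →₀ ℕ} (c : F)
    {k : ℕ} (hk : 1 ≤ k) (hmem : monomial (k • u) (1:F) ∈ I ^ k) :
    monomial u c ∈ gset I := by
  classical
  refine ⟨k, hk, fun i => if i = k then -((monomial u c) ^ k) else 0, ?_, ?_⟩
  · intro i hi
    beta_reduce
    by_cases h : i = k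
    · subst h
      rw [if_pos rfl]
      apply neg_mem
      rw [monomial_pow]
      have h2 : (monomial (i • u)) (c ^ i) = C (c ^ i) * monomial (i • u) (1:F) := by
        rw [C_mul_monomial, mul_one]
      rw [h2]
      exact Ideal.mul_mem_left _ _ hmem
    · rw [if_neg h]; exact zero_mem _
  · beta_reduce
    have h3 : ∀ i ∈ Finset.Icc 1 k,
        (if i = k then -((monomial u c) ^ k) else 0) * (monomial u c) ^ (k - i)
          = if i = k then -((monomial u c) ^ k * (monomial u c) ^ (k - i)) else 0 := by
      intro i _; split_ifs <;> simp [neg_mul]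
    rw [Finset.sum_congr rfl h3, Finset.sum_ite_eq' (Finset.Icc 1 k) k,
      if_pos (Finset.mem_Icc.mpr ⟨hk, le_refl k⟩), Nat.sub_self, pow_zero, mul_one,
      add_neg_cancel]

lemma gset_map {K L : Type} [Field K] [Field L] (φ : K →+* L) {A : Set (Fin n →₀ ℕ)}
    {g : MvPolynomial (Fin n) K}
    (hg : g ∈ gset (Ideal.span ((fun a => monomial a (1:K)) '' A))) :
    MvPolynomial.map φ g ∈ gset (Ideal.span ((fun a => monomial a (1:L)) '' A)) := by
  obtain ⟨k, hk, c, hc, heq⟩ := hg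
  refine ⟨k, hk, fun i => MvPolynomial.map φ (c i), fun i hi => ?_, ?_⟩
  · rw [mem_pow_iff]
    intro w hw
    exact (mem_pow_iff.mp (hc i hi)) w (MvPolynomial.support_map_subset _ _ hw)
  · have h1 := congrArg (MvPolynomial.map φ) heq
    simpa only [map_add, map_pow, map_sum, map_mul, map_zero] using h1

section Twist

variable {L : Type} [Field L]

noncomputable def twist (t : L) (M : ℕ) :
    MvPolynomial (Fin n) L →ₐ[L] MvPolynomial (Fin n) L :=
  aeval (fun i : Fin n => C (t ^ M ^ (i : ℕ)) * X i)

def wt (M : ℕ) (w : Fin n →₀ ℕ) : ℕ := ∑ i : Fin n, w i * M ^ (i : ℕ)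

lemma wt_support_sum (M : ℕ) (w : Fin n →₀ ℕ) :
    ∑ i ∈ w.support, M ^ (i : ℕ) * w i = wt M w := by
  rw [wt]
  rw [show (∑ i : Fin n, w i * M ^ (i:ℕ)) = ∑ i ∈ w.support, w i * M ^ (i:ℕ) from
    (Finset.sum_subset (Finset.subset_univ _) (fun i _ hi => by
      rw [Finsupp.notMem_support_iff.mp hi, zero_mul])).symm]
  exact Finset.sum_congr rfl fun i _ => mul_comm _ _

lemma twist_monomial (t : L) (M : ℕ) (w : Fin n →₀ ℕ) (c : L) :
    twist t M (monomial w c) = monomial w (t ^ wt M w * c) := by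
  rw [twist, aeval_monomial, Finsupp.prod]
  have h1 : ∀ i ∈ w.support, (C (t ^ M ^ (i : ℕ)) * X i : MvPolynomial (Fin n) L) ^ w i
      = C (t ^ (M ^ (i:ℕ) * w i)) * X i ^ w i := by
    intro i _
    rw [mul_pow, ← map_pow, ← pow_mul]
  rw [Finset.prod_congr rfl h1, Finset.prod_mul_distrib, ← map_prod,
    Finset.prod_pow_eq_pow_sum, wt_support_sum, algebraMap_eq, monomial_eq, map_mul,
    Finsupp.prod]
  ring

lemma twist_coeff (t : L) (M : ℕ) (g : MvPolynomial (Fin n) L) (w : Fin n →₀ ℕ) :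
    coeff w (twist t M g) = t ^ wt M w * coeff w g := by
  classical
  conv_lhs => rw [as_sum g]
  rw [map_sum, Finset.sum_congr rfl (fun u _ => by rw [twist_monomial]), MvPolynomial.coeff_sum]
  rw [Finset.sum_congr rfl (fun u (_ : u ∈ g.support) => coeff_monomial w u _),
    Finset.sum_ite_eq' g.support w]
  split_ifs with hmem
  · rfl
  · rw [notMem_support_iff.mp hmem, mul_zero]

lemma twist_support_subset (t : L) (M : ℕ) (g : MvPolynomial (Fin n) L) :
    (twist t M g).support ⊆ g.support := by
  intro w hw
  rw [mem_support_iff] at hw ⊢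
  intro hc
  rw [twist_coeff, hc, mul_zero] at hw
  exact hw rfl

lemma twist_gset (t : L) (M : ℕ) {A : Set (Fin n →₀ ℕ)} {g : MvPolynomial (Fin n) L}
    (hg : g ∈ gset (Ideal.span ((fun a => monomial a (1:L)) '' A))) :
    twist t M g ∈ gset (Ideal.span ((fun a => monomial a (1:L)) '' A)) := by
  obtain ⟨k, hk, c, hc, heq⟩ := hg
  refine ⟨k, hk, fun i => twist t M (c i), fun i hi => ?_, ?_⟩
  · rw [mem_pow_iff]
    intro w hw
    exact mem_pow_iff.mp (hc i hi) w (twist_support_subset t M _ hw)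
  · have h1 := congrArg (twist t M) heq
    simpa only [map_add, map_pow, map_sum, map_mul, map_zero] using h1

lemma digits_eq {M : ℕ} : ∀ m : ℕ, ∀ f g : ℕ → ℕ, (∀ i, f i < M) → (∀ i, g i < M) →
    (∑ i ∈ Finset.range m, f i * M ^ i) = (∑ i ∈ Finset.range m, g i * M ^ i) →
    ∀ i < m, f i = g i := by
  intro m
  induction m with
  | zero => intro f g _ _ _ i hi; omega
  | succ m IH =>
    intro f g hf hg hsum i hi
    rw [Finset.sum_range_succ', Finset.sum_range_succ'] at hsum
    have hrw : ∀ h : ℕ → ℕ, (∑ i ∈ Finset.range m, h (i+1) * M ^ (i+1))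
        = (∑ i ∈ Finset.range m, h (i+1) * M ^ i) * M := by
      intro h
      rw [Finset.sum_mul]
      exact Finset.sum_congr rfl fun j _ => by rw [pow_succ, mul_assoc]
    rw [hrw f, hrw g, pow_zero, mul_one, mul_one] at hsum
    have hM0 : 0 < M := lt_of_le_of_lt (Nat.zero_le _) (hf 0)
    have h0 : f 0 = g 0 := by
      have e1 := Nat.mul_add_mod' (∑ i ∈ Finset.range m, f (i+1) * M ^ i) M (f 0)
      have e2 := Nat.mul_add_mod' (∑ i ∈ Finset.range m, g (i+1) * M ^ i) M (g 0)
      rw [hsum, e2, Nat.mod_eq_of_lt (hf 0), Nat.mod_eq_of_lt (hg 0)] at e1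
      exact e1.symm
    rcases i with _ | j
    · exact h0
    · have hA : (∑ i ∈ Finset.range m, f (i+1) * M ^ i)
          = ∑ i ∈ Finset.range m, g (i+1) * M ^ i := by
        rw [← h0] at hsum
        have h2 := Nat.add_right_cancel hsum
        exact Nat.eq_of_mul_eq_mul_right hM0 h2
      exact IH (fun i => f (i+1)) (fun i => g (i+1)) (fun i => hf _) (fun i => hg _) hA j
        (by omega)

lemma wt_inj {M : ℕ} (hM : 0 < M) {w v : Fin n →₀ ℕ} (hw : ∀ i, w i < M)
    (hv : ∀ i, v i < M) (h : wt M w = wt M v) : w = v := by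
  classical
  set f : ℕ → ℕ := fun j => if hj : j < n then w ⟨j, hj⟩ else 0 with hfdef
  set g : ℕ → ℕ := fun j => if hj : j < n then v ⟨j, hj⟩ else 0 with hgdef
  have hfw : ∀ i : Fin n, f (i : ℕ) = w i := fun i => by rw [hfdef]; simp [i.isLt]
  have hgv : ∀ i : Fin n, g (i : ℕ) = v i := fun i => by rw [hgdef]; simp [i.isLt]
  have hsum : (∑ j ∈ Finset.range n, f j * M ^ j) = ∑ j ∈ Finset.range n, g j * M ^ j := by
    have e1 : ∑ j ∈ Finset.range n, f j * M ^ j = wt M w := by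
      rw [← Fin.sum_univ_eq_sum_range (fun j => f j * M ^ j) n, wt]
      exact Finset.sum_congr rfl fun i _ => by rw [hfw i]
    have e2 : ∑ j ∈ Finset.range n, g j * M ^ j = wt M v := by
      rw [← Fin.sum_univ_eq_sum_range (fun j => g j * M ^ j) n, wt]
      exact Finset.sum_congr rfl fun i _ => by rw [hgv i]
    rw [e1, e2, h]
  have hfb : ∀ j, f j < M := by
    intro j; rw [hfdef]; dsimp only; split
    · exact hw _
    · exact hM
  have hgb : ∀ j, g j < M := by
    intro j; rw [hgdef]; dsimp only; split
    · exact hv _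
    · exact hM
  have hd := digits_eq n f g hfb hgb hsum
  ext i
  have h1 := hd (i : ℕ) i.isLt
  rwa [hfw i, hgv i] at h1

lemma gset_support_closure {A : Set (Fin n →₀ ℕ)} (t : L)
    (ht : ∀ a b : ℕ, t ^ a = t ^ b → a = b) :
    ∀ N : ℕ, ∀ g : MvPolynomial (Fin n) L, g.support.card ≤ N →
      g ∈ gset (Ideal.span ((fun a => monomial a (1:L)) '' A)) →
      ∀ w ∈ g.support, ∃ k, 1 ≤ k ∧ monomial (k • w) (1:L)
        ∈ (Ideal.span ((fun a => monomial a (1:L)) '' A)) ^ k := by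
  intro N
  induction N with
  | zero =>
    intro g hcard _ w hw
    rw [Nat.le_zero, Finset.card_eq_zero] at hcard
    rw [hcard] at hw
    exact absurd hw (Finset.notMem_empty w)
  | succ N IH =>
    intro g hcard hg w0 hw0
    classical
    set M := (g.support.sup fun u => Finset.univ.sup fun i => u i) + 1 with hMdef
    have hM0 : 0 < M := Nat.succ_pos _
    have hbound : ∀ u ∈ g.support, ∀ i, u i < M := by
      intro u hu i
      have h1 : u i ≤ Finset.univ.sup fun i => u i := Finset.le_sup (Finset.mem_univ i)
      have h2 : (Finset.univ.sup fun i => u i)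
          ≤ g.support.sup fun u => Finset.univ.sup fun i => u i :=
        Finset.le_sup (f := fun u => Finset.univ.sup fun i => u i) hu
      omega
    set hh := twist t M g - C (t ^ wt M w0) * g with hhdef
    have hhg : hh ∈ gset (Ideal.span ((fun a => monomial a (1:L)) '' A)) := by
      rw [← mem_intCl_iff]
      exact Ideal.sub_mem _ (mem_intCl_iff.mpr (twist_gset t M hg))
        (Ideal.mul_mem_left _ _ (mem_intCl_iff.mpr hg))
    have hcoeff : ∀ u, coeff u hh = (t ^ wt M u - t ^ wt M w0) * coeff u g := by
      intro u
      rw [hhdef, coeff_sub, twist_coeff, coeff_C_mul, sub_mul]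
    have hsupp : hh.support = g.support.erase w0 := by
      ext u
      rw [Finset.mem_erase, mem_support_iff, hcoeff u, mem_support_iff]
      constructor
      · intro hne
        have hg' : coeff u g ≠ 0 := fun h0 => hne (by rw [h0, mul_zero])
        refine ⟨?_, hg'⟩
        rintro rfl
        exact hne (by rw [sub_self, zero_mul])
      · rintro ⟨hne, hg'⟩
        have hu : u ∈ g.support := mem_support_iff.mpr hg'
        have hwtne : wt M u ≠ wt M w0 :=
          fun he => hne (wt_inj hM0 (hbound u hu) (hbound w0 hw0) he)
        have hne0 : t ^ wt M u - t ^ wt M w0 ≠ 0 := by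
          intro h0
          exact hwtne (ht _ _ (sub_eq_zero.mp h0))
        exact mul_ne_zero hne0 hg'
    have hcard' : hh.support.card ≤ N := by
      rw [hsupp]
      have h1 := Finset.card_erase_of_mem hw0
      omega
    have hterm : ∀ u ∈ g.support.erase w0,
        monomial u (coeff u g) ∈ intCl (Ideal.span ((fun a => monomial a (1:L)) '' A)) := by
      intro u hu
      obtain ⟨k, hk1, hmem⟩ := IH hh hcard' hhg u (by rw [hsupp]; exact hu)
      exact Ideal.subset_span (monomial_mem_gset_of_pow _ hk1 hmem)
    have hmono : monomial w0 (coeff w0 g)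
        ∈ intCl (Ideal.span ((fun a => monomial a (1:L)) '' A)) := by
      have h1 := Finset.add_sum_erase g.support (fun u => monomial u (coeff u g)) hw0
      beta_reduce at h1
      rw [← as_sum g] at h1
      rw [eq_sub_of_add_eq h1]
      exact Ideal.sub_mem _ (mem_intCl_iff.mpr hg) (Ideal.sum_mem _ hterm)
    have hone : monomial w0 (1:L) ∈ gset (Ideal.span ((fun a => monomial a (1:L)) '' A)) := by
      have hc0 : coeff w0 g ≠ 0 := mem_support_iff.mp hw0
      have h2 : monomial w0 (1:L) = C (coeff w0 g)⁻¹ * monomial w0 (coeff w0 g) := by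
        rw [C_mul_monomial, inv_mul_cancel₀ hc0]
      rw [← mem_intCl_iff, h2]
      exact Ideal.mul_mem_left _ _ hmono
    exact monomial_gset hone

end Twist

lemma intCl_support_mem {A : Set (Fin n →₀ ℕ)} {g : MvPolynomial (Fin n) F}
    (hg : g ∈ intCl (Ideal.span ((fun a => monomial a (1:F)) '' A)))
    {w : Fin n →₀ ℕ} (hw : w ∈ g.support) :
    ∃ k, 1 ≤ k ∧ monomial (k • w) (1:F)
      ∈ (Ideal.span ((fun a => monomial a (1:F)) '' A)) ^ k := by
  classical
  set L := FractionRing (Polynomial F) with hLdef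
  set φ : F →+* L := (algebraMap (Polynomial F) L).comp Polynomial.C with hφdef
  have hφinj : Function.Injective φ :=
    (IsFractionRing.injective (Polynomial F) L).comp Polynomial.C_injective
  set t : L := algebraMap (Polynomial F) L Polynomial.X with htdef
  have ht : ∀ a b : ℕ, t ^ a = t ^ b → a = b := by
    intro a b hab
    rw [htdef, ← map_pow, ← map_pow] at hab
    have h1 := IsFractionRing.injective (Polynomial F) L hab
    have h2 := congrArg Polynomial.natDegree h1
    rwa [Polynomial.natDegree_X_pow, Polynomial.natDegree_X_pow] at h2
  have hg' : MvPolynomial.map φ g ∈ gset (Ideal.span ((fun a => monomial a (1:L)) '' A)) :=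
    gset_map φ (mem_intCl_iff.mp hg)
  have hw' : w ∈ (MvPolynomial.map φ g).support := by
    rw [MvPolynomial.support_map_of_injective _ hφinj]; exact hw
  obtain ⟨k, hk, hmem⟩ := gset_support_closure t ht (MvPolynomial.map φ g).support.card
    (MvPolynomial.map φ g) le_rfl hg' w hw'
  refine ⟨k, hk, ?_⟩
  rw [monomial_mem_pow_iff (one_ne_zero)] at hmem ⊢
  exact hmem

end StmtAux


namespace StmtAux

lemma exists_minGens_le {F : Type} [Field F] {n : ℕ} {J : Ideal (MvPolynomial (Fin n) F)} :
    ∀ d : ℕ, ∀ u : Fin n →₀ ℕ, (∑ i : Fin n, u i) ≤ d → monomial u (1:F) ∈ J →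
      ∃ b ∈ minGens J, b ≤ u := by
  intro d
  induction d with
  | zero =>
    intro u hd hu
    refine ⟨u, ⟨hu, ?_⟩, le_rfl⟩
    intro b hb hne
    exfalso
    apply hne
    have hu0 : ∀ i, u i = 0 := by
      intro i
      have h1 : u i ≤ ∑ j : Fin n, u j :=
        Finset.single_le_sum (f := fun j => u j) (fun j _ => Nat.zero_le _) (Finset.mem_univ i)
      omega
    ext i
    have h2 := (Finsupp.le_def.mp hb) i
    have h3 := hu0 i
    omega
  | succ d IH =>
    intro u hd hu
    by_cases hmin : ∀ b : Fin n →₀ ℕ, b ≤ u → b ≠ u → monomial b (1:F) ∉ J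
    · exact ⟨u, ⟨hu, hmin⟩, le_rfl⟩
    · push_neg at hmin
      obtain ⟨b, hble, hbne, hbJ⟩ := hmin
      have hlt : (∑ i : Fin n, b i) < ∑ i : Fin n, u i := by
        have hne' : ∃ i, b i ≠ u i := by
          by_contra hcon
          push_neg at hcon
          exact hbne (Finsupp.ext hcon)
        obtain ⟨i0, hi0⟩ := hne'
        refine Finset.sum_lt_sum (fun i _ => (Finsupp.le_def.mp hble) i)
          ⟨i0, Finset.mem_univ i0, ?_⟩
        have h4 := (Finsupp.le_def.mp hble) i0
        omega
      obtain ⟨b', hb', hb'le⟩ := IH b (by omega) hbJ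
      exact ⟨b', hb', le_trans hb'le hble⟩

end StmtAux

/-- Let `I` be a proper nonzero monomial ideal and `s ≥ 1` such that
`uˢ ∈ Iˢ` for every monomial `u ∈ G(\overline{I})`.  Then for every `m ≥ 1` and every
`a ∈ ℕ^n`, `√(\overline{I} : xᵃ) = √(I^{sm} : x^{(sm)a})`. -/
theorem radical_colon_intCl_eq_pow {K : Type} [Field K] {n : ℕ}
    (I : Ideal (MvPolynomial (Fin n) K))
    (hmon : IsMonomialIdeal I) (hbot : I ≠ ⊥) (htop : I ≠ ⊤)
    (s : ℕ) (hs : 1 ≤ s)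
    (hgen : ∀ a ∈ minGens (intCl I), (monomial a (1 : K)) ^ s ∈ I ^ s)
    (m : ℕ) (hm : 1 ≤ m) (a : Fin n →₀ ℕ) :
    Ideal.radical ((intCl I).colon (Ideal.span {monomial a (1 : K)})) =
      Ideal.radical ((I ^ (s * m)).colon
        (Ideal.span {monomial ((s * m) • a) (1 : K)})) := by
  classical
  obtain ⟨A, rfl⟩ := (hmon : ∃ A : Set (Fin n →₀ ℕ), I = Ideal.span ((fun a => (monomial a (1 : K))) '' A))
  have hq : 1 ≤ s * m := by simpa using Nat.mul_le_mul hs hm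
  set v : MvPolynomial (Fin n) K := monomial a (1:K) with hvdef
  have hvq : monomial ((s * m) • a) (1:K) = v ^ (s * m) := by
    rw [hvdef, monomial_pow, one_pow]
  rw [hvq]
  apply le_antisymm
  · have hle : (intCl (Ideal.span ((fun a => monomial a (1:K)) '' A))).colon
        (Ideal.span {v})
        ≤ Ideal.radical (((Ideal.span ((fun a => monomial a (1:K)) '' A)) ^ (s * m)).colon
          (Ideal.span {v ^ (s * m)})) := by
      intro g hgmem
      rw [Ideal.mem_colon_span_singleton] at hgmem
      have hmem_rad : ∀ w ∈ g.support, monomial w (coeff w g)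
          ∈ Ideal.radical (((Ideal.span ((fun a => monomial a (1:K)) '' A)) ^ (s * m)).colon
            (Ideal.span {v ^ (s * m)})) := by
        intro w hw
        have hwa : w + a ∈ (g * v).support := by
          rw [mem_support_iff, hvdef, coeff_mul_monomial', if_pos le_add_self,
            add_tsub_cancel_right, mul_one]
          exact mem_support_iff.mp hw
        obtain ⟨k0, hk0, hk0mem⟩ := StmtAux.intCl_support_mem hgmem hwa
        have hu : monomial (w + a) (1:K)
            ∈ intCl (Ideal.span ((fun a => monomial a (1:K)) '' A)) :=
          Ideal.subset_span (StmtAux.monomial_mem_gset_of_pow _ hk0 hk0mem)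
        obtain ⟨b, hbmin, hble⟩ :=
          StmtAux.exists_minGens_le (∑ i : Fin n, (w + a) i) (w + a) le_rfl hu
        have hbs := hgen b hbmin
        have hsb : (monomial b (1:K)) ^ s = monomial (s • b) (1:K) := by
          rw [monomial_pow, one_pow]
        have hprod : monomial (s • b) (1:K) * monomial (s • ((w + a) - b)) (1:K)
            = monomial (s • (w + a)) (1:K) := by
          rw [monomial_mul, one_mul, ← smul_add, add_tsub_cancel_of_le hble]
        have hstep1 : monomial (s • (w + a)) (1:K)
            ∈ (Ideal.span ((fun a => monomial a (1:K)) '' A)) ^ s := by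
          rw [← hprod, ← hsb]
          exact Ideal.mul_mem_right _ _ hbs
        have hpow : (monomial (s • (w + a)) (1:K)) ^ m
            = monomial ((s * m) • (w + a)) (1:K) := by
          rw [monomial_pow, one_pow, smul_smul, Nat.mul_comm m s]
        have hstep2 : monomial ((s * m) • (w + a)) (1:K)
            ∈ (Ideal.span ((fun a => monomial a (1:K)) '' A)) ^ (s * m) := by
          rw [pow_mul, ← hpow]
          exact Ideal.pow_mem_pow hstep1 m
        have hrad : monomial w (1:K)
            ∈ Ideal.radical (((Ideal.span ((fun a => monomial a (1:K)) '' A)) ^ (s * m)).colon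
              (Ideal.span {v ^ (s * m)})) := by
          refine Ideal.mem_radical_iff.mpr ⟨s * m, ?_⟩
          rw [Ideal.mem_colon_span_singleton]
          have heq2 : (monomial w (1:K)) ^ (s * m) * v ^ (s * m)
              = monomial ((s * m) • (w + a)) (1:K) := by
            rw [hvdef, monomial_pow, monomial_pow, one_pow, monomial_mul, one_mul, ← smul_add]
          rw [heq2]
          exact hstep2
        have hsplit : monomial w (coeff w g) = C (coeff w g) * monomial w (1:K) := by
          rw [C_mul_monomial, mul_one]
        rw [hsplit]
        exact Ideal.mul_mem_left _ _ hrad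
      have hgs : g = ∑ w ∈ g.support, monomial w (coeff w g) := as_sum g
      rw [hgs]
      exact Submodule.sum_mem _ hmem_rad
    exact le_trans (Ideal.radical_mono hle) (le_of_eq (Ideal.radical_idem _))
  · apply Ideal.radical_mono
    intro g hgmem
    rw [Ideal.mem_colon_span_singleton] at hgmem ⊢
    apply Ideal.subset_span
    have hkey : (g * v) ^ (s * m)
        ∈ (Ideal.span ((fun a => monomial a (1:K)) '' A)) ^ (s * m) := by
      have h5 : (g * v) ^ (s * m) = g ^ (s * m - 1) * (g * v ^ (s * m)) := by
        rw [mul_pow, show g ^ (s * m) = g ^ (s * m - 1) * g by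
          rw [← pow_succ]; congr 1; omega]
        ring
      rw [h5]
      exact Ideal.mul_mem_left _ _ hgmem
    refine ⟨s * m, hq, fun i => if i = s * m then -((g * v) ^ (s * m)) else 0, ?_, ?_⟩
    · intro i hi
      beta_reduce
      by_cases h : i = s * m
      · subst h; rw [if_pos rfl]; exact neg_mem hkey
      · rw [if_neg h]; exact zero_mem _
    · beta_reduce
      have h3 : ∀ i ∈ Finset.Icc 1 (s * m),
          (if i = s * m then -((g * v) ^ (s * m)) else 0) * (g * v) ^ (s * m - i)
            = if i = s * m then -((g * v) ^ (s * m) * (g * v) ^ (s * m - i)) else 0 := by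
        intro i _; split_ifs <;> simp [neg_mul]
      rw [Finset.sum_congr rfl h3, Finset.sum_ite_eq' (Finset.Icc 1 (s * m)) (s * m),
        if_pos (Finset.mem_Icc.mpr ⟨hq, le_refl (s * m)⟩), Nat.sub_self, pow_zero, mul_one,
        add_neg_cancel]
end

section
/- Let I be a proper nonzero monomial ideal of S = K[x_1,…,x_n]. Then for every pair of integers s, m ≥ 1 and every vector a ∈ ℕ^n, one has √(\overline{I^s} : x^a) = √(\overline{I^{sm}} : x^{ma}). -/
open MvPolynomial

section Aux
variable {K : Type} [Field K] {n : ℕ}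

lemma C_mem_reesAlgebra (J : Ideal (MvPolynomial (Fin n) K)) (r : MvPolynomial (Fin n) K) :
    Polynomial.C r ∈ reesAlgebra J := by
  have := (reesAlgebra J).algebraMap_mem r
  rwa [Polynomial.algebraMap_eq] at this

lemma C_mem_integralClosure (J : Ideal (MvPolynomial (Fin n) K)) (r : MvPolynomial (Fin n) K) :
    Polynomial.C r ∈ integralClosure (reesAlgebra J) (Polynomial (MvPolynomial (Fin n) K)) :=
  (integralClosure (reesAlgebra J) (Polynomial (MvPolynomial (Fin n) K))).algebraMap_mem
    ⟨Polynomial.C r, C_mem_reesAlgebra J r⟩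

lemma CX_pow_eq (g : MvPolynomial (Fin n) K) (m j : ℕ) :
    (Polynomial.C g * Polynomial.X ^ m) ^ j = Polynomial.C (g ^ j) * Polynomial.X ^ (m * j) := by
  rw [mul_pow, ← Polynomial.C_pow, ← pow_mul]

set_option synthInstance.maxHeartbeats 1000000 in
set_option maxHeartbeats 1000000 in
lemma intCl_pow_isIntegral (J : Ideal (MvPolynomial (Fin n) K)) (m : ℕ)
    {g : MvPolynomial (Fin n) K} (hg : g ∈ intCl (J ^ m)) :
    Polynomial.C g * Polynomial.X ^ m ∈
      integralClosure (reesAlgebra J) (Polynomial (MvPolynomial (Fin n) K)) := by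
  refine Submodule.span_induction ?_ ?_ ?_ ?_ hg
  · rintro f ⟨k, hk, c, hc, heq⟩
    -- membership of coefficients in the Rees algebra
    have hmem : ∀ i ∈ Finset.Icc 1 k,
        Polynomial.C (c i) * Polynomial.X ^ (m * i) ∈ reesAlgebra J := by
      intro i hi
      rw [mem_reesAlgebra_iff]
      intro j
      rw [Polynomial.coeff_C_mul, Polynomial.coeff_X_pow]
      split_ifs with hj
      · subst hj
        rw [mul_one, pow_mul]
        exact hc i hi
      · rw [mul_zero]; exact zero_mem _
    set Q : Polynomial (reesAlgebra J) :=
      Polynomial.X ^ k + ∑ i ∈ (Finset.Icc 1 k).attach,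
        Polynomial.C (⟨Polynomial.C (c i.1) * Polynomial.X ^ (m * i.1), hmem i.1 i.2⟩ :
          reesAlgebra J) * Polynomial.X ^ (k - i.1) with hQ
    have hQmonic : Q.Monic := by
      refine Polynomial.monic_X_pow_add ?_
      refine lt_of_le_of_lt (Polynomial.degree_sum_le _ _) ?_
      refine (Finset.sup_lt_iff (WithBot.bot_lt_coe k)).mpr ?_
      intro i _
      refine lt_of_le_of_lt (Polynomial.degree_C_mul_X_pow_le _ _) ?_
      exact Nat.cast_lt.mpr <| Nat.sub_lt (Nat.lt_of_lt_of_le Nat.zero_lt_one hk)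
        (Nat.lt_of_lt_of_le Nat.zero_lt_one (Finset.mem_Icc.mp i.2).1)
    refine ⟨Q, hQmonic, ?_⟩
    rw [← Polynomial.aeval_def, hQ, map_add, map_pow, Polynomial.aeval_X, map_sum]
    simp only [map_mul, Polynomial.aeval_C, map_pow, Polynomial.aeval_X]
    have hterm : ∀ i ∈ (Finset.Icc 1 k).attach,
        (algebraMap (reesAlgebra J) (Polynomial (MvPolynomial (Fin n) K)))
            (⟨Polynomial.C (c i.1) * Polynomial.X ^ (m * i.1), hmem i.1 i.2⟩ : reesAlgebra J) *
          (Polynomial.C f * Polynomial.X ^ m) ^ (k - i.1) =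
        Polynomial.C (c i.1 * f ^ (k - i.1)) * Polynomial.X ^ (m * k) := by
      intro i _
      have h1 : m * i.1 + m * (k - i.1) = m * k := by
        rw [← Nat.left_distrib, Nat.add_sub_cancel' (Finset.mem_Icc.mp i.2).2]
      show (Polynomial.C (c i.1) * Polynomial.X ^ (m * i.1)) *
          (Polynomial.C f * Polynomial.X ^ m) ^ (k - i.1) = _
      rw [CX_pow_eq, mul_mul_mul_comm, ← Polynomial.C_mul, ← pow_add, h1]
    rw [Finset.sum_congr rfl hterm, ← Finset.sum_mul, ← map_sum, CX_pow_eq]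
    rw [Finset.sum_attach (Finset.Icc 1 k) (fun i => c i * f ^ (k - i))]
    rw [← add_mul, ← map_add, heq, map_zero, zero_mul]
  · simpa using (integralClosure (reesAlgebra J) _).zero_mem
  · intro x y _ _ hx hy
    rw [map_add, add_mul]
    exact add_mem hx hy
  · intro a x _ hx
    rw [smul_eq_mul, map_mul, mul_assoc]
    exact mul_mem (C_mem_integralClosure J a) hx

end Aux

section Aux2
variable {K : Type} [Field K] {n : ℕ}

set_option synthInstance.maxHeartbeats 1000000 in
set_option maxHeartbeats 1000000 in
lemma isIntegral_mem_intCl (J : Ideal (MvPolynomial (Fin n) K)) (m : ℕ)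
    {h : MvPolynomial (Fin n) K}
    (hint : Polynomial.C h * Polynomial.X ^ m ∈
      integralClosure (reesAlgebra J) (Polynomial (MvPolynomial (Fin n) K))) :
    h ∈ intCl (J ^ m) := by
  obtain ⟨P, hPm, hPe⟩ := hint
  rw [← Polynomial.aeval_def] at hPe
  set k := P.natDegree with hkdef
  have hk : 1 ≤ k := by
    by_contra hc
    have hk0 : k = 0 := by omega
    have := (Polynomial.Monic.natDegree_eq_zero hPm).mp hk0
    rw [this, map_one] at hPe
    exact one_ne_zero hPe
  rw [Polynomial.aeval_eq_sum_range] at hPe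
  have hco := congrArg (fun q => Polynomial.coeff q (m * k)) hPe
  rw [Polynomial.finset_sum_coeff, Polynomial.coeff_zero] at hco
  have step : ∀ i ∈ Finset.range (k + 1),
      (P.coeff i • (Polynomial.C h * Polynomial.X ^ m) ^ i).coeff (m * k) =
      ((P.coeff i : Polynomial (MvPolynomial (Fin n) K))).coeff (m * (k - i)) * h ^ i := by
    intro i hi
    have hik : i ≤ k := Nat.lt_succ_iff.mp (Finset.mem_range.mp hi)
    rw [Algebra.smul_def]
    have : (algebraMap (reesAlgebra J) (Polynomial (MvPolynomial (Fin n) K))) (P.coeff i) =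
        ((P.coeff i : Polynomial (MvPolynomial (Fin n) K))) := rfl
    rw [this, CX_pow_eq, ← mul_assoc, Polynomial.coeff_mul_X_pow',
      if_pos (Nat.mul_le_mul_left m hik), Polynomial.coeff_mul_C, ← Nat.mul_sub]
  rw [Finset.sum_congr rfl step, Finset.sum_range_succ] at hco
  have hlead : ((P.coeff k : Polynomial (MvPolynomial (Fin n) K))).coeff (m * (k - k)) * h ^ k
      = h ^ k := by
    rw [hkdef, hPm.coeff_natDegree]
    norm_num
  rw [hlead] at hco
  refine Ideal.subset_span
    ⟨k, hk, fun j => ((P.coeff (k - j) : Polynomial (MvPolynomial (Fin n) K))).coeff (m * j),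
      ?_, ?_⟩
  · intro j _
    rw [← pow_mul]
    exact (mem_reesAlgebra_iff J _).mp (P.coeff (k - j)).2 (m * j)
  · have hsum : ∑ j ∈ Finset.Icc 1 k,
        ((P.coeff (k - j) : Polynomial (MvPolynomial (Fin n) K))).coeff (m * j) * h ^ (k - j) =
        ∑ i ∈ Finset.range k,
        ((P.coeff i : Polynomial (MvPolynomial (Fin n) K))).coeff (m * (k - i)) * h ^ i := by
      refine Finset.sum_nbij' (fun j => k - j) (fun i => k - i) ?_ ?_ ?_ ?_ ?_
      · intro j hj
        have := Finset.mem_Icc.mp hj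
        exact Finset.mem_range.mpr (by omega)
      · intro i hi
        have := Finset.mem_range.mp hi
        exact Finset.mem_Icc.mpr (by omega)
      · intro j hj; have := Finset.mem_Icc.mp hj; omega
      · intro i hi; have := Finset.mem_range.mp hi; omega
      · intro j hj
        have := Finset.mem_Icc.mp hj
        rw [Nat.sub_sub_self this.2]
    rw [hsum]
    linear_combination hco
end Aux2


set_option maxHeartbeats 1000000 in
/-- For a proper nonzero monomial ideal `I`, integers `s, m ≥ 1` and every
`a ∈ ℕ^n`, `√(\overline{I^s} : xᵃ) = √(\overline{I^{sm}} : x^{ma})`. -/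
theorem radical_colon_intCl_pow_eq_intCl_pow {K : Type} [Field K] {n : ℕ}
    (I : Ideal (MvPolynomial (Fin n) K))
    (hmon : IsMonomialIdeal I) (hbot : I ≠ ⊥) (htop : I ≠ ⊤)
    (s m : ℕ) (hs : 1 ≤ s) (hm : 1 ≤ m) (a : Fin n →₀ ℕ) :
    Ideal.radical ((intCl (I ^ s)).colon (Ideal.span {monomial a (1 : K)})) =
      Ideal.radical ((intCl (I ^ (s * m))).colon
        (Ideal.span {monomial (m • a) (1 : K)})) := by
  ext f
  simp only [Ideal.mem_radical_iff, Ideal.mem_colon_span_singleton]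
  constructor
  · rintro ⟨k, hkmem⟩
    refine ⟨k * m, ?_⟩
    have h1 : f ^ k * monomial a 1 ∈ intCl ((I ^ s) ^ 1) := by rwa [pow_one]
    have h2 := intCl_pow_isIntegral (I ^ s) 1 h1
    have h3 := pow_mem h2 m
    rw [CX_pow_eq, one_mul] at h3
    have h5 := isIntegral_mem_intCl (I ^ s) m h3
    rw [← pow_mul] at h5
    rwa [mul_pow, monomial_pow, one_pow, ← pow_mul] at h5
  · rintro ⟨l, hl⟩
    refine ⟨l, ?_⟩
    rw [pow_mul] at hl
    have h2 := intCl_pow_isIntegral (I ^ s) m hl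
    have h3 := mul_mem (C_mem_integralClosure (I ^ s) (f ^ (l * (m - 1)))) h2
    have key : (Polynomial.C (f ^ l * monomial a 1) * Polynomial.X) ^ m =
        Polynomial.C (f ^ (l * (m - 1))) *
          (Polynomial.C (f ^ l * monomial (m • a) (1 : K)) * Polynomial.X ^ m) := by
      obtain ⟨m', rfl⟩ : ∃ m', m = m' + 1 := ⟨m - 1, (Nat.succ_pred_eq_of_pos hm).symm⟩
      rw [mul_pow, ← Polynomial.C_pow, Nat.add_sub_cancel, ← mul_assoc, ← Polynomial.C_mul]
      congr 2
      rw [mul_pow, monomial_pow, one_pow]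
      ring
    rw [← key] at h3
    have h4 : IsIntegral (reesAlgebra (I ^ s))
        (Polynomial.C (f ^ l * monomial a (1 : K)) * Polynomial.X) :=
      IsIntegral.of_pow (Nat.lt_of_lt_of_le Nat.zero_lt_one hm) h3
    have h5 : Polynomial.C (f ^ l * monomial a (1 : K)) * Polynomial.X ^ 1 ∈
        integralClosure (reesAlgebra (I ^ s)) (Polynomial (MvPolynomial (Fin n) K)) := by
      rwa [pow_one]
    have h6 := isIntegral_mem_intCl (I ^ s) 1 h5
    rwa [pow_one] at h6
end
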